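/- arXiv:1211.6693 — 4 statements merged into one kernel-verified Lean document; each statement's English description precedes it below -/
import Mathlib

section
/- Let (ξ₁, ξ₂) be a centered bivariate Gaussian vector with variances σ₁² and σ₂² and correlation ρ ∈ (0, 1). Then for any N₁, N₂ > 0 there exists α > 0 such that E{(1 + |ξ₁|^{N₁} + |ξ₂|^{N₂}) 1_{{ξ₁ ≥ u, ξ₂ < 0}}} = o(e^{−α u² − u²/(2σ₁²)}) as u → ∞. -/
open MeasureTheory ProbabilityTheory Filter

open scoped NNReal ENNReal

section AuxLemmas

open Real Set

private lemma aux_integral_sq_exp {b : ℝ} (hb : 0 < b) :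
    ∫ x : ℝ, x ^ 2 * Real.exp (-b * x ^ 2) = Real.sqrt (π / b) / (2 * b) := by
  have hint : Integrable (fun x : ℝ => x ^ 2 * Real.exp (-b * x ^ 2)) := by
    have := integrable_rpow_mul_exp_neg_mul_sq hb (s := 2) (by norm_num)
    simpa [Real.rpow_natCast] using (by exact_mod_cast this : Integrable
      (fun x : ℝ => x ^ ((2:ℕ):ℝ) * Real.exp (-b * x ^ 2)))
  have hIoi : ∫ x in Ioi (0:ℝ), 2 * (x ^ 2 * Real.exp (-b * x ^ 2)) =
      (1 / b) ^ ((3:ℝ)/2) * Real.Gamma ((3:ℝ)/2) := by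
    calc ∫ x in Ioi (0:ℝ), 2 * (x ^ 2 * Real.exp (-b * x ^ 2))
        = ∫ x in Ioi (0:ℝ),
            (2 * x ^ ((2:ℝ) - 1)) •
              ((fun y : ℝ => y ^ ((1:ℝ)/2) * Real.exp (-(b * y))) (x ^ (2:ℝ))) := by
          apply setIntegral_congr_fun measurableSet_Ioi
          intro x hx
          have hx0 : (0:ℝ) < x := hx
          have h1 : (x : ℝ) ^ ((2:ℝ)) = x ^ (2:ℕ) := by
            rw [show ((2:ℝ)) = ((2:ℕ):ℝ) by norm_num, Real.rpow_natCast]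
          have h2 : ((x:ℝ) ^ (2:ℕ)) ^ ((1:ℝ)/2) = x := by
            rw [← Real.rpow_natCast x 2, ← Real.rpow_mul hx0.le]
            norm_num
          simp only [smul_eq_mul, h1, h2]
          rw [show (2:ℝ) - 1 = 1 by norm_num, Real.rpow_one]
          ring_nf
      _ = ∫ y in Ioi (0:ℝ), y ^ ((1:ℝ)/2) * Real.exp (-(b * y)) := by
          exact integral_comp_rpow_Ioi_of_pos
            (g := fun y : ℝ => y ^ ((1:ℝ)/2) * Real.exp (-(b * y))) zero_lt_two
      _ = ∫ y in Ioi (0:ℝ), y ^ ((3:ℝ)/2 - 1) * Real.exp (-(b * y)) := by norm_num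
      _ = (1 / b) ^ ((3:ℝ)/2) * Real.Gamma ((3:ℝ)/2) :=
          Real.integral_rpow_mul_exp_neg_mul_Ioi (by norm_num) hb
  have hGamma : Real.Gamma ((3:ℝ)/2) = Real.sqrt π / 2 := by
    rw [show ((3:ℝ)/2) = 1/2 + 1 by norm_num, Real.Gamma_add_one (by norm_num),
      Real.Gamma_one_half_eq]
    ring
  have hsplit : (∫ x : ℝ, x ^ 2 * Real.exp (-b * x ^ 2)) =
      2 * ∫ x in Ioi (0:ℝ), x ^ 2 * Real.exp (-b * x ^ 2) := by
    have := intervalIntegral.integral_Iic_add_Ioi (μ := volume) (b := (0:ℝ))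
      hint.integrableOn hint.integrableOn
    have hneg : ∫ x in Iic (0:ℝ), x ^ 2 * Real.exp (-b * x ^ 2)
        = ∫ x in Ioi (0:ℝ), x ^ 2 * Real.exp (-b * x ^ 2) := by
      rw [show Iic (0:ℝ) = Iic (-0:ℝ) by norm_num,
        ← integral_comp_neg_Ioi (f := fun x : ℝ => x ^ 2 * Real.exp (-b * x ^ 2))]
      simp
    rw [← this, hneg]; ring
  rw [hsplit]
  have h2 : ∫ x in Ioi (0:ℝ), 2 * (x ^ 2 * Real.exp (-b * x ^ 2)) =
      2 * ∫ x in Ioi (0:ℝ), x ^ 2 * Real.exp (-b * x ^ 2) := by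
    rw [integral_const_mul]
  rw [← h2, hIoi, hGamma]
  have hb' : (0:ℝ) < 1 / b := by positivity
  rw [show ((3:ℝ)/2) = 1 + 1/2 by norm_num, Real.rpow_add hb', Real.rpow_one,
    ← Real.sqrt_eq_rpow, show π / b = π * (1/b) by ring, Real.sqrt_mul Real.pi_pos.le]
  ring

private lemma aux_gauss_integral (v : ℝ≥0) (g : ℝ → ℝ) (hv : v ≠ 0) :
    ∫ x, g x ∂(gaussianReal 0 v) = ∫ x, gaussianPDFReal 0 v x * g x := by
  rw [gaussianReal_of_var_ne_zero _ hv]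
  have : gaussianPDF 0 v = fun x => ((Real.toNNReal (gaussianPDFReal 0 v x) : ℝ≥0) : ℝ≥0∞) := by
    funext x; rfl
  rw [this, integral_withDensity_eq_integral_smul
    ((measurable_gaussianPDFReal 0 v).real_toNNReal) g]
  congr 1
  funext x
  rw [NNReal.smul_def, smul_eq_mul, Real.coe_toNNReal _ (gaussianPDFReal_nonneg 0 v x)]

private lemma aux_gauss_sq (v : ℝ≥0) : ∫ x, x ^ 2 ∂(gaussianReal 0 v) = v := by
  by_cases hv : v = 0
  · simp [hv, gaussianReal_zero_var]
  rw [aux_gauss_integral v _ hv]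
  have hvpos : (0:ℝ) < v := lt_of_le_of_ne v.coe_nonneg (by exact_mod_cast (Ne.symm hv))
  have hb : (0:ℝ) < (2 * (v:ℝ))⁻¹ := by positivity
  have hpdf : ∀ x : ℝ, gaussianPDFReal 0 v x * x ^ 2
      = (Real.sqrt (2 * π * v))⁻¹ * (x ^ 2 * Real.exp (-(2 * (v:ℝ))⁻¹ * x ^ 2)) := by
    intro x
    simp only [gaussianPDFReal_def]
    rw [show -(x - 0) ^ 2 / (2 * (v:ℝ)) = -(2 * (v:ℝ))⁻¹ * x ^ 2 by
      rw [neg_div, div_eq_inv_mul]; ring]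
    ring
  simp only [hpdf]
  rw [integral_const_mul, aux_integral_sq_exp hb]
  rw [show π / (2 * (v:ℝ))⁻¹ = 2 * π * v by field_simp]
  have h1 : Real.sqrt (2 * π * v) > 0 := Real.sqrt_pos.mpr (by positivity)
  field_simp

private lemma aux_gauss_exp (v : ℝ≥0) :
    Integrable Real.exp (gaussianReal 0 v) ∧
      ∫ x, Real.exp x ∂(gaussianReal 0 v) = Real.exp (v / 2) := by
  by_cases hv : v = 0
  · subst hv
    rw [gaussianReal_zero_var]
    constructor
    · refine ⟨Real.measurable_exp.aestronglyMeasurable, ?_⟩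
      rw [hasFiniteIntegral_iff_norm, lintegral_dirac]
      exact ENNReal.ofReal_lt_top
    · simp
  have hvpos : (0:ℝ) < v := lt_of_le_of_ne v.coe_nonneg (by exact_mod_cast (Ne.symm hv))
  have hb : (0:ℝ) < (2 * (v:ℝ))⁻¹ := by positivity
  have harg : ∀ x : ℝ, -(x - 0) ^ 2 / (2 * (v:ℝ)) + x
      = (v:ℝ)/2 + -(2*(v:ℝ))⁻¹ * (x - (v:ℝ)) ^ 2 := by
    intro x; field_simp; ring
  have hkey : ∀ x : ℝ, gaussianPDFReal 0 v x * Real.exp x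
      = (Real.sqrt (2 * π * v))⁻¹ * Real.exp ((v:ℝ)/2) *
          Real.exp (-(2*(v:ℝ))⁻¹ * (x - v) ^ 2) := by
    intro x
    simp only [gaussianPDFReal_def]
    calc (Real.sqrt (2 * π * v))⁻¹ * Real.exp (-(x - 0) ^ 2 / (2 * (v:ℝ))) * Real.exp x
        = (Real.sqrt (2 * π * v))⁻¹ * Real.exp (-(x - 0) ^ 2 / (2 * (v:ℝ)) + x) := by
          rw [Real.exp_add]; ring
      _ = _ := by rw [harg x, Real.exp_add]; ring
  constructor
  · rw [gaussianReal_of_var_ne_zero _ hv]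
    rw [integrable_withDensity_iff (measurable_gaussianPDF 0 v)
      (ae_of_all _ fun x => ENNReal.ofReal_lt_top)]
    have : ∀ x : ℝ, Real.exp x * (gaussianPDF 0 v x).toReal
        = (Real.sqrt (2 * π * v))⁻¹ * Real.exp ((v:ℝ)/2) *
          Real.exp (-(2*(v:ℝ))⁻¹ * (x - v) ^ 2) := by
      intro x
      rw [gaussianPDF_def, ENNReal.toReal_ofReal (gaussianPDFReal_nonneg 0 v x), ← hkey x]
      ring
    simp only [this]
    exact ((integrable_exp_neg_mul_sq hb).comp_sub_right (v:ℝ)).const_mul _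
  · rw [aux_gauss_integral v _ hv]
    simp only [hkey]
    rw [integral_const_mul]
    have : ∫ x : ℝ, Real.exp (-(2*(v:ℝ))⁻¹ * (x - v) ^ 2)
        = ∫ x : ℝ, Real.exp (-(2*(v:ℝ))⁻¹ * x ^ 2) :=
      integral_sub_right_eq_self (fun x => Real.exp (-(2*(v:ℝ))⁻¹ * x ^ 2)) (v:ℝ)
    rw [this, integral_gaussian, show π / (2 * (v:ℝ))⁻¹ = 2 * π * v by field_simp]
    have h1 : Real.sqrt (2 * π * v) > 0 := Real.sqrt_pos.mpr (by positivity)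
    field_simp

private lemma aux_poly {N : ℝ} (hN : 0 < N) :
    ∃ C > 0, ∀ x : ℝ, |x| ^ N ≤ C * (Real.exp x + Real.exp (-x)) := by
  refine ⟨Real.exp (N * Real.log N - N), Real.exp_pos _, fun x => ?_⟩
  have habs : |x| ^ N ≤ Real.exp (N * Real.log N - N) * Real.exp |x| := by
    rcases eq_or_lt_of_le (abs_nonneg x) with h0 | h0
    · rw [← h0, Real.zero_rpow hN.ne']
      positivity
    · rw [Real.rpow_def_of_pos h0, ← Real.exp_add]
      apply Real.exp_le_exp.mpr
      have hlog : Real.log |x| = Real.log (|x| / N) + Real.log N := by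
        rw [Real.log_div h0.ne' hN.ne']; ring
      have hb : Real.log (|x| / N) ≤ |x| / N - 1 :=
        Real.log_le_sub_one_of_pos (by positivity)
      have := mul_le_mul_of_nonneg_left (by linarith [hb] :
        Real.log |x| ≤ |x| / N - 1 + Real.log N) hN.le
      calc Real.log |x| * N = N * Real.log |x| := by ring
        _ ≤ N * (|x| / N - 1 + Real.log N) := this
        _ = N * Real.log N - N + |x| := by field_simp; ring
  have hexp : Real.exp |x| ≤ Real.exp x + Real.exp (-x) := by
    rcases abs_cases x with ⟨h, _⟩ | ⟨h, _⟩
    · rw [h]; nlinarith [Real.exp_pos (-x)]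
    · rw [h]; nlinarith [Real.exp_pos x]
  calc |x| ^ N ≤ Real.exp (N * Real.log N - N) * Real.exp |x| := habs
    _ ≤ _ := by nlinarith [Real.exp_pos (N * Real.log N - N)]

end AuxLemmas

set_option maxHeartbeats 1600000 in
/-- For a centered bivariate Gaussian vector with positive correlation `ρ ∈ (0,1)`,
`E{(1 + |ξ₁|^{N₁} + |ξ₂|^{N₂}) 1_{ξ₁ ≥ u, ξ₂ < 0}} = o(e^{−αu² − u²/(2σ₁²)})` as
`u → ∞`, for some `α > 0`. -/
theorem gaussian_pair_opposite_tail_superexp_small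
    {Ω : Type*} [MeasurableSpace Ω] (P : Measure Ω) [IsProbabilityMeasure P]
    (ξ₁ ξ₂ : Ω → ℝ) (hmeas₁ : Measurable ξ₁) (hmeas₂ : Measurable ξ₂)
    (hGauss : ∀ a b : ℝ, ∃ w : NNReal,
      Measure.map (fun ω => a * ξ₁ ω + b * ξ₂ ω) P = gaussianReal 0 w)
    (σ₁ σ₂ ρ : ℝ) (hσ₁ : 0 < σ₁) (hσ₂ : 0 < σ₂) (hρ0 : 0 < ρ) (hρ1 : ρ < 1)
    (hvar₁ : ∫ ω, ξ₁ ω ^ 2 ∂P = σ₁ ^ 2)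
    (hvar₂ : ∫ ω, ξ₂ ω ^ 2 ∂P = σ₂ ^ 2)
    (hcorr : ∫ ω, ξ₁ ω * ξ₂ ω ∂P = ρ * σ₁ * σ₂)
    (N₁ N₂ : ℝ) (hN₁ : 0 < N₁) (hN₂ : 0 < N₂) :
    ∃ α > 0,
      (fun u : ℝ =>
          ∫ ω, (1 + |ξ₁ ω| ^ N₁ + |ξ₂ ω| ^ N₂) *
            Set.indicator {ω | u ≤ ξ₁ ω ∧ ξ₂ ω < 0} (fun _ => (1 : ℝ)) ω ∂P)
        =o[atTop] fun u : ℝ => Real.exp (-α * u ^ 2 - u ^ 2 / (2 * σ₁ ^ 2)) := by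
  obtain ⟨c, hc_def⟩ : ∃ x : ℝ, x = ρ * σ₁ / σ₂ := ⟨_, rfl⟩
  have hc : 0 < c := by rw [hc_def]; positivity
  obtain ⟨w, hw_def⟩ : ∃ x : ℝ, x = σ₁ ^ 2 * (1 - ρ ^ 2) := ⟨_, rfl⟩
  have hρsq : ρ ^ 2 < 1 := by nlinarith
  have hw : 0 < w := by
    rw [hw_def]
    have h1 : 0 < 1 - ρ ^ 2 := by linarith
    positivity
  have hwlt : w < σ₁ ^ 2 := by
    rw [hw_def]
    nlinarith [pow_pos hσ₁ 2, pow_pos hρ0 2, mul_pos (pow_pos hσ₁ 2) (pow_pos hρ0 2)]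
  -- integrability of second moments
  have hI1 : Integrable (fun ω => ξ₁ ω ^ 2) P := by
    by_contra h; rw [integral_undef h] at hvar₁; nlinarith
  have hI2 : Integrable (fun ω => ξ₂ ω ^ 2) P := by
    by_contra h; rw [integral_undef h] at hvar₂; nlinarith
  have hI12 : Integrable (fun ω => ξ₁ ω * ξ₂ ω) P := by
    refine (hI1.add hI2).mono' ((hmeas₁.mul hmeas₂).aestronglyMeasurable)
      (ae_of_all _ fun ω => ?_)
    rw [Real.norm_eq_abs, abs_mul]
    simp only [Pi.add_apply]
    nlinarith [sq_nonneg (|ξ₁ ω| - |ξ₂ ω|), sq_abs (ξ₁ ω), sq_abs (ξ₂ ω),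
      abs_nonneg (ξ₁ ω), abs_nonneg (ξ₂ ω)]
  -- the moment generating function of any linear combination
  have hmgf : ∀ a b : ℝ,
      Integrable (fun ω => Real.exp (a * ξ₁ ω + b * ξ₂ ω)) P ∧
      ∫ ω, Real.exp (a * ξ₁ ω + b * ξ₂ ω) ∂P
        = Real.exp ((a ^ 2 * σ₁ ^ 2 + 2 * a * b * (ρ * σ₁ * σ₂) + b ^ 2 * σ₂ ^ 2) / 2) := by
    intro a b
    obtain ⟨v, hv⟩ := hGauss a b
    have hLmeas : Measurable (fun ω => a * ξ₁ ω + b * ξ₂ ω) :=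
      (hmeas₁.const_mul a).add (hmeas₂.const_mul b)
    have hvar : ((v : ℝ)) = a ^ 2 * σ₁ ^ 2 + 2 * a * b * (ρ * σ₁ * σ₂) + b ^ 2 * σ₂ ^ 2 := by
      have h1 : ∫ x, x ^ 2 ∂(Measure.map (fun ω => a * ξ₁ ω + b * ξ₂ ω) P)
          = ∫ ω, (a * ξ₁ ω + b * ξ₂ ω) ^ 2 ∂P :=
        integral_map hLmeas.aemeasurable
          ((measurable_id.pow_const 2).aestronglyMeasurable)
      rw [hv, aux_gauss_sq] at h1
      rw [h1]
      have hexp : (fun ω => (a * ξ₁ ω + b * ξ₂ ω) ^ 2)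
          = fun ω => a ^ 2 * ξ₁ ω ^ 2 + (2 * a * b) * (ξ₁ ω * ξ₂ ω) + b ^ 2 * ξ₂ ω ^ 2 := by
        funext ω; ring
      have j1 : Integrable (fun ω => a ^ 2 * ξ₁ ω ^ 2) P := hI1.const_mul _
      have j2 : Integrable (fun ω => (2 * a * b) * (ξ₁ ω * ξ₂ ω)) P := hI12.const_mul _
      have j3 : Integrable (fun ω => b ^ 2 * ξ₂ ω ^ 2) P := hI2.const_mul _
      have j12 : Integrable (fun ω => a ^ 2 * ξ₁ ω ^ 2 + (2 * a * b) * (ξ₁ ω * ξ₂ ω)) P :=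
        j1.add j2
      rw [hexp, integral_add j12 j3, integral_add j1 j2, integral_const_mul,
        integral_const_mul, integral_const_mul, hvar₁, hvar₂, hcorr]
    have hint : Integrable (fun ω => Real.exp (a * ξ₁ ω + b * ξ₂ ω)) P := by
      have h := (aux_gauss_exp v).1
      rw [← hv] at h
      exact (integrable_map_measure Real.measurable_exp.aestronglyMeasurable
        hLmeas.aemeasurable).mp h
    refine ⟨hint, ?_⟩
    have h2 : ∫ ω, Real.exp (a * ξ₁ ω + b * ξ₂ ω) ∂P = ∫ x, Real.exp x ∂(gaussianReal 0 v) := by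
      rw [← hv, integral_map hLmeas.aemeasurable Real.measurable_exp.aestronglyMeasurable]
    rw [h2, (aux_gauss_exp v).2, hvar]
  obtain ⟨C₁, hC₁, hpoly₁⟩ := aux_poly hN₁
  obtain ⟨C₂, hC₂, hpoly₂⟩ := aux_poly hN₂
  obtain ⟨s, hs_def⟩ : ∃ x : ℝ, x = (σ₁ ^ 2 + σ₂ ^ 2) / 2 := ⟨_, rfl⟩
  have hs : 0 < s := by rw [hs_def]; positivity
  obtain ⟨K, hK_def⟩ : ∃ x : ℝ, x = (1 + 2 * C₁ + 2 * C₂) * Real.exp s := ⟨_, rfl⟩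
  have hK : 0 < K := by rw [hK_def]; positivity
  -- the key integral bound
  have key : ∀ u : ℝ, 0 ≤ u →
      (∫ ω, (1 + |ξ₁ ω| ^ N₁ + |ξ₂ ω| ^ N₂) *
        Set.indicator {ω | u ≤ ξ₁ ω ∧ ξ₂ ω < 0} (fun _ => (1 : ℝ)) ω ∂P)
        ≤ K * Real.exp (-u ^ 2 / (2 * w) + u) := by
    intro u hu
    obtain ⟨t, ht_def⟩ : ∃ x : ℝ, x = u / w := ⟨_, rfl⟩
    have ht : 0 ≤ t := by rw [ht_def]; exact div_nonneg hu hw.le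
    have hu_eq : u = t * w := by rw [ht_def, div_mul_cancel₀ _ hw.ne']
    obtain ⟨f0, hf0_def⟩ : ∃ g : Ω → ℝ, g = fun ω =>
      Real.exp (-(t * u)) * Real.exp (t * ξ₁ ω + (-(t * c)) * ξ₂ ω) := ⟨_, rfl⟩
    obtain ⟨f1, hf1_def⟩ : ∃ g : Ω → ℝ, g = fun ω =>
      (C₁ * Real.exp (-(t * u))) * Real.exp ((t + 1) * ξ₁ ω + (-(t * c)) * ξ₂ ω) := ⟨_, rfl⟩
    obtain ⟨f2, hf2_def⟩ : ∃ g : Ω → ℝ, g = fun ω =>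
      (C₁ * Real.exp (-(t * u))) * Real.exp ((t - 1) * ξ₁ ω + (-(t * c)) * ξ₂ ω) := ⟨_, rfl⟩
    obtain ⟨f3, hf3_def⟩ : ∃ g : Ω → ℝ, g = fun ω =>
      (C₂ * Real.exp (-(t * u))) * Real.exp (t * ξ₁ ω + (1 - t * c) * ξ₂ ω) := ⟨_, rfl⟩
    obtain ⟨f4, hf4_def⟩ : ∃ g : Ω → ℝ, g = fun ω =>
      (C₂ * Real.exp (-(t * u))) * Real.exp (t * ξ₁ ω + (-1 - t * c) * ξ₂ ω) := ⟨_, rfl⟩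
    have i0 : Integrable f0 P := by rw [hf0_def]; exact (hmgf t (-(t * c))).1.const_mul _
    have i1 : Integrable f1 P := by rw [hf1_def]; exact (hmgf (t + 1) (-(t * c))).1.const_mul _
    have i2 : Integrable f2 P := by rw [hf2_def]; exact (hmgf (t - 1) (-(t * c))).1.const_mul _
    have i3 : Integrable f3 P := by rw [hf3_def]; exact (hmgf t (1 - t * c)).1.const_mul _
    have i4 : Integrable f4 P := by rw [hf4_def]; exact (hmgf t (-1 - t * c)).1.const_mul _
    have i01 : Integrable (fun ω => f0 ω + f1 ω) P := i0.add i1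
    have i012 : Integrable (fun ω => f0 ω + f1 ω + f2 ω) P := i01.add i2
    have i0123 : Integrable (fun ω => f0 ω + f1 ω + f2 ω + f3 ω) P := i012.add i3
    have i01234 : Integrable (fun ω => f0 ω + f1 ω + f2 ω + f3 ω + f4 ω) P := i0123.add i4
    have hle : ∀ ω, (1 + |ξ₁ ω| ^ N₁ + |ξ₂ ω| ^ N₂) *
        Set.indicator {ω | u ≤ ξ₁ ω ∧ ξ₂ ω < 0} (fun _ => (1 : ℝ)) ω
          ≤ f0 ω + f1 ω + f2 ω + f3 ω + f4 ω := by
      intro ω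
      simp only [hf0_def, hf1_def, hf2_def, hf3_def, hf4_def]
      by_cases hA : ω ∈ {ω | u ≤ ξ₁ ω ∧ ξ₂ ω < 0}
      · rw [Set.indicator_of_mem hA, mul_one]
        obtain ⟨h1, h2⟩ := hA
        have harg0 : 0 ≤ -(t * u) + (t * ξ₁ ω + (-(t * c)) * ξ₂ ω) := by
          nlinarith [mul_nonneg ht (sub_nonneg.mpr h1),
            mul_nonneg (mul_nonneg ht hc.le) (neg_nonneg.mpr h2.le)]
        have p0 : 1 ≤ Real.exp (-(t * u)) * Real.exp (t * ξ₁ ω + (-(t * c)) * ξ₂ ω) := by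
          rw [← Real.exp_add]; exact Real.one_le_exp harg0
        have p1 : Real.exp (ξ₁ ω)
            ≤ Real.exp (-(t * u)) * Real.exp ((t + 1) * ξ₁ ω + (-(t * c)) * ξ₂ ω) := by
          rw [← Real.exp_add]; apply Real.exp_le_exp.mpr; linarith [harg0]
        have p2 : Real.exp (-ξ₁ ω)
            ≤ Real.exp (-(t * u)) * Real.exp ((t - 1) * ξ₁ ω + (-(t * c)) * ξ₂ ω) := by
          rw [← Real.exp_add]; apply Real.exp_le_exp.mpr; linarith [harg0]
        have p3 : Real.exp (ξ₂ ω)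
            ≤ Real.exp (-(t * u)) * Real.exp (t * ξ₁ ω + (1 - t * c) * ξ₂ ω) := by
          rw [← Real.exp_add]; apply Real.exp_le_exp.mpr; linarith [harg0]
        have p4 : Real.exp (-ξ₂ ω)
            ≤ Real.exp (-(t * u)) * Real.exp (t * ξ₁ ω + (-1 - t * c) * ξ₂ ω) := by
          rw [← Real.exp_add]; apply Real.exp_le_exp.mpr; linarith [harg0]
        have q1 : |ξ₁ ω| ^ N₁ ≤ C₁ * (Real.exp (-(t * u)) *
              Real.exp ((t + 1) * ξ₁ ω + (-(t * c)) * ξ₂ ω)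
            + Real.exp (-(t * u)) * Real.exp ((t - 1) * ξ₁ ω + (-(t * c)) * ξ₂ ω)) :=
          le_trans (hpoly₁ _) (mul_le_mul_of_nonneg_left (add_le_add p1 p2) hC₁.le)
        have q2 : |ξ₂ ω| ^ N₂ ≤ C₂ * (Real.exp (-(t * u)) *
              Real.exp (t * ξ₁ ω + (1 - t * c) * ξ₂ ω)
            + Real.exp (-(t * u)) * Real.exp (t * ξ₁ ω + (-1 - t * c) * ξ₂ ω)) :=
          le_trans (hpoly₂ _) (mul_le_mul_of_nonneg_left (add_le_add p3 p4) hC₂.le)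
        linarith [q1, q2, p0]
      · rw [Set.indicator_of_notMem hA, mul_zero]
        have he : ∀ y : ℝ, (0:ℝ) ≤ Real.exp y := fun y => (Real.exp_pos y).le
        refine add_nonneg (add_nonneg (add_nonneg (add_nonneg ?_ ?_) ?_) ?_) ?_
        · exact mul_nonneg (he _) (he _)
        · exact mul_nonneg (mul_nonneg hC₁.le (he _)) (he _)
        · exact mul_nonneg (mul_nonneg hC₁.le (he _)) (he _)
        · exact mul_nonneg (mul_nonneg hC₂.le (he _)) (he _)
        · exact mul_nonneg (mul_nonneg hC₂.le (he _)) (he _)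
    have hF_le : (∫ ω, (1 + |ξ₁ ω| ^ N₁ + |ξ₂ ω| ^ N₂) *
        Set.indicator {ω | u ≤ ξ₁ ω ∧ ξ₂ ω < 0} (fun _ => (1 : ℝ)) ω ∂P)
          ≤ ∫ ω, f0 ω + f1 ω + f2 ω + f3 ω + f4 ω ∂P := by
      refine integral_mono_of_nonneg (ae_of_all _ fun ω => ?_) i01234 (ae_of_all _ hle)
      have : (0:ℝ) ≤ Set.indicator {ω | u ≤ ξ₁ ω ∧ ξ₂ ω < 0} (fun _ => (1 : ℝ)) ω :=
        Set.indicator_nonneg (fun _ _ => zero_le_one) ω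
      positivity
    -- compute the integral
    have v0 : ∫ ω, f0 ω ∂P = Real.exp (-(t * u)) *
        Real.exp ((t ^ 2 * σ₁ ^ 2 + 2 * t * (-(t * c)) * (ρ * σ₁ * σ₂)
          + (-(t * c)) ^ 2 * σ₂ ^ 2) / 2) := by
      simp only [hf0_def]
      rw [integral_const_mul, (hmgf t (-(t * c))).2]
    have v1 : ∫ ω, f1 ω ∂P = (C₁ * Real.exp (-(t * u))) *
        Real.exp (((t + 1) ^ 2 * σ₁ ^ 2 + 2 * (t + 1) * (-(t * c)) * (ρ * σ₁ * σ₂)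
          + (-(t * c)) ^ 2 * σ₂ ^ 2) / 2) := by
      simp only [hf1_def]
      rw [integral_const_mul, (hmgf (t + 1) (-(t * c))).2]
    have v2 : ∫ ω, f2 ω ∂P = (C₁ * Real.exp (-(t * u))) *
        Real.exp (((t - 1) ^ 2 * σ₁ ^ 2 + 2 * (t - 1) * (-(t * c)) * (ρ * σ₁ * σ₂)
          + (-(t * c)) ^ 2 * σ₂ ^ 2) / 2) := by
      simp only [hf2_def]
      rw [integral_const_mul, (hmgf (t - 1) (-(t * c))).2]
    have v3 : ∫ ω, f3 ω ∂P = (C₂ * Real.exp (-(t * u))) *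
        Real.exp ((t ^ 2 * σ₁ ^ 2 + 2 * t * (1 - t * c) * (ρ * σ₁ * σ₂)
          + (1 - t * c) ^ 2 * σ₂ ^ 2) / 2) := by
      simp only [hf3_def]
      rw [integral_const_mul, (hmgf t (1 - t * c)).2]
    have v4 : ∫ ω, f4 ω ∂P = (C₂ * Real.exp (-(t * u))) *
        Real.exp ((t ^ 2 * σ₁ ^ 2 + 2 * t * (-1 - t * c) * (ρ * σ₁ * σ₂)
          + (-1 - t * c) ^ 2 * σ₂ ^ 2) / 2) := by
      simp only [hf4_def]
      rw [integral_const_mul, (hmgf t (-1 - t * c)).2]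
    have hGval : ∫ ω, f0 ω + f1 ω + f2 ω + f3 ω + f4 ω ∂P
        = (∫ ω, f0 ω ∂P) + (∫ ω, f1 ω ∂P) + (∫ ω, f2 ω ∂P)
          + (∫ ω, f3 ω ∂P) + (∫ ω, f4 ω ∂P) := by
      rw [integral_add i0123 i4, integral_add i012 i3, integral_add i01 i2,
        integral_add i0 i1]
    -- bound the value
    have hQ0 : t ^ 2 * σ₁ ^ 2 + 2 * t * (-(t * c)) * (ρ * σ₁ * σ₂)
        + (-(t * c)) ^ 2 * σ₂ ^ 2 = t ^ 2 * w := by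
      rw [hc_def, hw_def]; field_simp; ring
    have hQ1 : (t + 1) ^ 2 * σ₁ ^ 2 + 2 * (t + 1) * (-(t * c)) * (ρ * σ₁ * σ₂)
        + (-(t * c)) ^ 2 * σ₂ ^ 2 = t ^ 2 * w + 2 * t * w + σ₁ ^ 2 := by
      rw [hc_def, hw_def]; field_simp; ring
    have hQ2 : (t - 1) ^ 2 * σ₁ ^ 2 + 2 * (t - 1) * (-(t * c)) * (ρ * σ₁ * σ₂)
        + (-(t * c)) ^ 2 * σ₂ ^ 2 = t ^ 2 * w - 2 * t * w + σ₁ ^ 2 := by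
      rw [hc_def, hw_def]; field_simp; ring
    have hQ3 : t ^ 2 * σ₁ ^ 2 + 2 * t * (1 - t * c) * (ρ * σ₁ * σ₂)
        + (1 - t * c) ^ 2 * σ₂ ^ 2 = t ^ 2 * w + σ₂ ^ 2 := by
      rw [hc_def, hw_def]; field_simp; ring
    have hQ4 : t ^ 2 * σ₁ ^ 2 + 2 * t * (-1 - t * c) * (ρ * σ₁ * σ₂)
        + (-1 - t * c) ^ 2 * σ₂ ^ 2 = t ^ 2 * w + σ₂ ^ 2 := by
      rw [hc_def, hw_def]; field_simp; ring
    have htarget : -u ^ 2 / (2 * w) + u = -(t ^ 2 * w) / 2 + t * w := by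
      rw [hu_eq]; field_simp [hw.ne']
    have htw : 0 ≤ t * w := mul_nonneg ht hw.le
    obtain ⟨E, hE_def⟩ : ∃ x : ℝ, x = Real.exp (-u ^ 2 / (2 * w) + u) := ⟨_, rfl⟩
    have hE : 0 < E := by rw [hE_def]; exact Real.exp_pos _
    have hD : Real.exp s > 0 := Real.exp_pos _
    have hcore : ∀ q : ℝ, q / 2 - t * u ≤ -(t ^ 2 * w) / 2 + t * w + s →
        Real.exp (-(t * u)) * Real.exp (q / 2) ≤ E * Real.exp s := by
      intro q hq
      rw [← Real.exp_add, hE_def, ← Real.exp_add, htarget]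
      apply Real.exp_le_exp.mpr
      linarith
    have htu : t * u = t ^ 2 * w := by rw [hu_eq]; ring
    have b0 : Real.exp (-(t * u)) * Real.exp ((t ^ 2 * w) / 2) ≤ E * Real.exp s := by
      apply hcore; rw [htu]; linarith [hs, htw]
    have b1 : Real.exp (-(t * u)) * Real.exp ((t ^ 2 * w + 2 * t * w + σ₁ ^ 2) / 2)
        ≤ E * Real.exp s := by
      apply hcore; rw [htu, hs_def]; linarith [sq_nonneg σ₂, htw]
    have b2 : Real.exp (-(t * u)) * Real.exp ((t ^ 2 * w - 2 * t * w + σ₁ ^ 2) / 2)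
        ≤ E * Real.exp s := by
      apply hcore; rw [htu, hs_def]; linarith [sq_nonneg σ₂, htw]
    have b3 : Real.exp (-(t * u)) * Real.exp ((t ^ 2 * w + σ₂ ^ 2) / 2)
        ≤ E * Real.exp s := by
      apply hcore; rw [htu, hs_def]; linarith [sq_nonneg σ₁, htw]
    calc (∫ ω, (1 + |ξ₁ ω| ^ N₁ + |ξ₂ ω| ^ N₂) *
        Set.indicator {ω | u ≤ ξ₁ ω ∧ ξ₂ ω < 0} (fun _ => (1 : ℝ)) ω ∂P)
        ≤ ∫ ω, f0 ω + f1 ω + f2 ω + f3 ω + f4 ω ∂P := hF_le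
      _ ≤ K * E := by
          rw [hGval, v0, v1, v2, v3, v4, hQ0, hQ1, hQ2, hQ3, hQ4, hK_def]
          have b1' := mul_le_mul_of_nonneg_left b1 hC₁.le
          have b2' := mul_le_mul_of_nonneg_left b2 hC₁.le
          have b3' := mul_le_mul_of_nonneg_left b3 hC₂.le
          linarith [b0, b1', b2', b3']
      _ = K * Real.exp (-u ^ 2 / (2 * w) + u) := by rw [hE_def]
  -- choose α and conclude
  obtain ⟨α, hα_def⟩ : ∃ x : ℝ, x = (1 / (2 * w) - 1 / (2 * σ₁ ^ 2)) / 2 := ⟨_, rfl⟩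
  have hα : 0 < α := by
    have h := one_div_lt_one_div_of_lt (by positivity : (0:ℝ) < 2 * w)
      (by linarith [hwlt] : 2 * w < 2 * σ₁ ^ 2)
    rw [hα_def]; linarith
  refine ⟨α, hα, ?_⟩
  rw [Asymptotics.isLittleO_iff_tendsto (fun x hx => absurd hx (Real.exp_ne_zero _))]
  have hupper : Tendsto (fun u : ℝ => K * Real.exp (u - α * u ^ 2)) atTop (nhds 0) := by
    rw [show (0:ℝ) = K * 0 by ring]
    apply Tendsto.const_mul
    apply Real.tendsto_exp_atBot.comp
    have h1 : Tendsto (fun u : ℝ => u * (α * u - 1)) atTop atTop := by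
      apply Filter.Tendsto.atTop_mul_atTop₀ tendsto_id
      exact tendsto_atTop_add_const_right _ _ (tendsto_id.const_mul_atTop hα)
    have h2 : Tendsto (fun u : ℝ => -(u * (α * u - 1))) atTop atBot :=
      tendsto_neg_atBot_iff.mpr h1
    refine h2.congr (fun u => by ring)
  apply tendsto_of_tendsto_of_tendsto_of_le_of_le' tendsto_const_nhds hupper
  · filter_upwards with u
    apply div_nonneg _ (Real.exp_pos _).le
    apply integral_nonneg
    intro ω
    have : (0:ℝ) ≤ Set.indicator {ω | u ≤ ξ₁ ω ∧ ξ₂ ω < 0} (fun _ => (1 : ℝ)) ω :=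
      Set.indicator_nonneg (fun _ _ => zero_le_one) ω
    positivity
  · filter_upwards [eventually_ge_atTop (0:ℝ)] with u hu
    rw [div_le_iff₀ (Real.exp_pos _)]
    have hrhs : K * Real.exp (u - α * u ^ 2) * Real.exp (-α * u ^ 2 - u ^ 2 / (2 * σ₁ ^ 2))
        = K * Real.exp (-u ^ 2 / (2 * w) + u) := by
      rw [mul_assoc, ← Real.exp_add]
      congr 2
      rw [hα_def]
      field_simp
      ring
    rw [hrhs]
    exact key u hu
end

section
/- Let (ξ₁, ξ₂) be a centered bivariate Gaussian vector with variances σ₁², σ₂² and correlation ρ ∈ (−1, 1) with ρ ≤ ρ̄ for some ρ̄ < 1. Then for any ε > 0 there exists a constant C such that for all large u, E{(ξ₁ ξ₂)^m 1_{{ξ₁ ≥ u, ξ₂ ≥ u}}} ≤ C exp(ε u² − u²/((1+ρ̄) max(σ₁,σ₂)²)) for any fixed positive integer m. -/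
open MeasureTheory ProbabilityTheory Filter Real

lemma intA {b : ℝ} (hb : 0 < b) (n : ℕ) :
    Integrable (fun x : ℝ => x ^ n * Real.exp (-b * x ^ 2)) := by
  have hbound : ∀ x : ℝ, ‖x ^ n * Real.exp (-b * x ^ 2)‖ ≤
      Real.exp ((n : ℝ) ^ 2 / (2 * b)) * Real.exp (-(b / 2) * x ^ 2) := by
    intro x
    have h1 : |x| ^ n ≤ Real.exp ((n : ℝ) * |x|) := by
      calc |x| ^ n ≤ Real.exp |x| ^ n :=
            pow_le_pow_left₀ (abs_nonneg x) (by linarith [Real.add_one_le_exp |x|]) n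
        _ = Real.exp ((n : ℝ) * |x|) := (Real.exp_nat_mul |x| n).symm
    have h2 : (n : ℝ) * |x| ≤ (n : ℝ) ^ 2 / (2 * b) + (b / 2) * x ^ 2 := by
      have h := sq_nonneg (b * |x| - (n : ℝ))
      have hax : |x| ^ 2 = x ^ 2 := sq_abs x
      rw [div_add' _ _ _ (by positivity), le_div_iff₀ (by positivity), ← sq_abs x]
      nlinarith [sq_nonneg (b * |x| - (n : ℝ))]
    have h3 : ‖x ^ n * Real.exp (-b * x ^ 2)‖ = |x| ^ n * Real.exp (-b * x ^ 2) := by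
      rw [norm_mul, Real.norm_eq_abs, Real.norm_eq_abs, abs_pow,
        abs_of_pos (Real.exp_pos _)]
    rw [h3, ← Real.exp_add]
    calc |x| ^ n * Real.exp (-b * x ^ 2) ≤ Real.exp ((n : ℝ) * |x|) * Real.exp (-b * x ^ 2) :=
          mul_le_mul_of_nonneg_right h1 (Real.exp_pos _).le
      _ = Real.exp ((n : ℝ) * |x| + -b * x ^ 2) := (Real.exp_add _ _).symm
      _ ≤ Real.exp ((n : ℝ) ^ 2 / (2 * b) + -(b / 2) * x ^ 2) := by
          apply Real.exp_le_exp.mpr; nlinarith [h2]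
  refine Integrable.mono' ((integrable_exp_neg_mul_sq (half_pos hb)).const_mul _)
    ?_ (Filter.Eventually.of_forall hbound)
  exact ((continuous_pow n).mul
    (Real.continuous_exp.comp (continuous_const.mul (continuous_pow 2)))).aestronglyMeasurable

lemma intB (w : NNReal) (n : ℕ) (β : ℝ) (hβ : (w : ℝ) ≠ 0 → β < (2 * (w : ℝ))⁻¹) :
    Integrable (fun x : ℝ => x ^ n * Real.exp (β * x ^ 2)) (gaussianReal 0 w) := by
  by_cases hw : w = 0
  · rw [hw, gaussianReal_zero_var]
    exact ⟨((continuous_pow n).mul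
      (Real.continuous_exp.comp (continuous_const.mul (continuous_pow 2)))).aestronglyMeasurable,
      by rw [HasFiniteIntegral, lintegral_dirac]; exact ENNReal.coe_lt_top⟩
  · have hw' : (0 : ℝ) < w := lt_of_le_of_ne w.coe_nonneg (by exact_mod_cast (Ne.symm hw))
    have hb : 0 < (2 * (w : ℝ))⁻¹ - β := sub_pos.2 (hβ (ne_of_gt hw'))
    rw [gaussianReal_of_var_ne_zero _ hw,
      integrable_withDensity_iff (measurable_gaussianPDF _ _)
        (Filter.Eventually.of_forall fun x => ENNReal.ofReal_lt_top)]
    have hgφ : ∀ x : ℝ, (x ^ n * Real.exp (β * x ^ 2)) * (gaussianPDF 0 w x).toReal =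
        (Real.sqrt (2 * π * w))⁻¹ *
          (x ^ n * Real.exp (-((2 * (w : ℝ))⁻¹ - β) * x ^ 2)) := by
      intro x
      rw [gaussianPDF, ENNReal.toReal_ofReal (gaussianPDFReal_nonneg _ _ _), gaussianPDFReal]
      rw [show -(x - 0) ^ 2 / (2 * (w : ℝ)) = -(2 * (w : ℝ))⁻¹ * x ^ 2 by
        field_simp; ring]
      rw [show -((2 * (w : ℝ))⁻¹ - β) * x ^ 2 = β * x ^ 2 + -(2 * (w : ℝ))⁻¹ * x ^ 2 by ring,
        Real.exp_add]
      ring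
    exact (Integrable.congr ((intA hb n).const_mul _) (Filter.Eventually.of_forall
      fun x => (hgφ x).symm))

lemma intC (w : NNReal) : ∫ x, x ^ 2 ∂(gaussianReal 0 w) = w := by
  by_cases hw : w = 0
  · simp [hw]
  · have hw' : (0 : ℝ) < w := lt_of_le_of_ne w.coe_nonneg (by exact_mod_cast (Ne.symm hw))
    set b : ℝ := (2 * (w : ℝ))⁻¹ with hbdef
    have hb : 0 < b := by positivity
    rw [gaussianReal_of_var_ne_zero _ hw]
    rw [show gaussianPDF 0 w = fun x => ((gaussianPDFReal 0 w x).toNNReal : ENNReal) from rfl]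
    rw [integral_withDensity_eq_integral_smul
      (f := fun x => (gaussianPDFReal 0 w x).toNNReal)
      (by exact measurable_real_toNNReal.comp (measurable_gaussianPDFReal 0 w))
      (fun x : ℝ => x ^ 2)]
    have hfx : ∀ x : ℝ, (gaussianPDFReal 0 w x).toNNReal • x ^ 2 =
        (Real.sqrt (2 * π * w))⁻¹ * (x ^ 2 * Real.exp (-b * x ^ 2)) := by
      intro x
      rw [NNReal.smul_def, smul_eq_mul, Real.coe_toNNReal _ (gaussianPDFReal_nonneg _ _ _),
        gaussianPDFReal]
      rw [show -(x - 0) ^ 2 / (2 * (w : ℝ)) = -b * x ^ 2 by rw [hbdef]; field_simp; ring]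
      ring
    simp_rw [hfx]
    rw [integral_const_mul]
    have heven : (∫ x : ℝ, x ^ 2 * Real.exp (-b * x ^ 2)) =
        2 * ∫ x in Set.Ioi (0 : ℝ), x ^ 2 * Real.exp (-b * x ^ 2) := by
      calc (∫ x : ℝ, x ^ 2 * Real.exp (-b * x ^ 2))
          = ∫ x : ℝ, (fun t : ℝ => t ^ 2 * Real.exp (-b * t ^ 2)) |x| := by
            congr 1; funext x; simp [sq_abs]
        _ = 2 * ∫ x in Set.Ioi (0 : ℝ), x ^ 2 * Real.exp (-b * x ^ 2) := by exact integral_comp_abs (f := fun t => t ^ 2 * Real.exp (-b * t ^ 2))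
    rw [heven]
    have hIoi : (∫ x in Set.Ioi (0 : ℝ), x ^ 2 * Real.exp (-b * x ^ 2)) =
        b ^ (-((2 : ℝ) + 1) / 2) * (1 / 2) * Real.Gamma (((2 : ℝ) + 1) / 2) := by
      rw [← integral_rpow_mul_exp_neg_mul_rpow (by norm_num : (0:ℝ) < 2)
        (by norm_num : (-1:ℝ) < 2) hb]
      refine setIntegral_congr_fun measurableSet_Ioi (fun x hx => ?_)
      have hx0 : (0:ℝ) ≤ x := le_of_lt hx
      rw [show (2 : ℝ) = ((2 : ℕ) : ℝ) by norm_num, Real.rpow_natCast]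
    rw [hIoi]
    have hGamma : Real.Gamma (((2 : ℝ) + 1) / 2) = Real.sqrt π / 2 := by
      rw [show ((2 : ℝ) + 1) / 2 = 1 / 2 + 1 by norm_num,
        Real.Gamma_add_one (by norm_num), Real.Gamma_one_half_eq]
      ring
    have hbpow : b ^ (-((2 : ℝ) + 1) / 2) = (2 * (w : ℝ)) * Real.sqrt (2 * (w : ℝ)) := by
      rw [hbdef, show (-((2 : ℝ) + 1) / 2) = -((3:ℝ)/2) by norm_num,
        Real.rpow_neg (by positivity), Real.inv_rpow (by positivity), inv_inv]
      rw [show (3 : ℝ)/2 = 1 + 1/2 by norm_num, Real.rpow_add (by positivity),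
        Real.rpow_one, ← Real.sqrt_eq_rpow]
    rw [hGamma, hbpow]
    have hsqrt : Real.sqrt (2 * π * (w : ℝ)) = Real.sqrt π * Real.sqrt (2 * (w : ℝ)) := by
      rw [show 2 * π * (w : ℝ) = π * (2 * (w : ℝ)) by ring, Real.sqrt_mul Real.pi_pos.le]
    rw [hsqrt]
    have h1 : Real.sqrt π ≠ 0 := ne_of_gt (Real.sqrt_pos.mpr Real.pi_pos)
    have h2 : Real.sqrt (2 * (w : ℝ)) ≠ 0 := ne_of_gt (Real.sqrt_pos.mpr (by positivity))
    field_simp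

set_option maxHeartbeats 1000000 in
/-- For a centered bivariate Gaussian vector with correlation `ρ ≤ ρ̄ < 1`, for any
`ε > 0` there is a constant `C` such that for all large `u`,
`E{(ξ₁ξ₂)^m 1_{ξ₁ ≥ u, ξ₂ ≥ u}} ≤ C exp(εu² − u²/((1+ρ̄) max(σ₁,σ₂)²))`. -/
theorem gaussian_pair_joint_tail_bound
    {Ω : Type*} [MeasurableSpace Ω] (P : Measure Ω) [IsProbabilityMeasure P]
    (ξ₁ ξ₂ : Ω → ℝ) (hmeas₁ : Measurable ξ₁) (hmeas₂ : Measurable ξ₂)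
    (hGauss : ∀ a b : ℝ, ∃ w : NNReal,
      Measure.map (fun ω => a * ξ₁ ω + b * ξ₂ ω) P = gaussianReal 0 w)
    (σ₁ σ₂ ρ ρbar : ℝ) (hσ₁ : 0 < σ₁) (hσ₂ : 0 < σ₂)
    (hρlb : -1 < ρ) (hρub : ρ ≤ ρbar) (hρbar : ρbar < 1)
    (hvar₁ : ∫ ω, ξ₁ ω ^ 2 ∂P = σ₁ ^ 2)
    (hvar₂ : ∫ ω, ξ₂ ω ^ 2 ∂P = σ₂ ^ 2)
    (hcorr : ∫ ω, ξ₁ ω * ξ₂ ω ∂P = ρ * σ₁ * σ₂)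
    (m : ℕ) (hm : 1 ≤ m) (ε : ℝ) (hε : 0 < ε) :
    ∃ C : ℝ, ∀ᶠ u in atTop,
      ∫ ω, (ξ₁ ω * ξ₂ ω) ^ m *
          Set.indicator {ω | u ≤ ξ₁ ω ∧ u ≤ ξ₂ ω} (fun _ => (1 : ℝ)) ω ∂P ≤
        C * Real.exp (ε * u ^ 2 - u ^ 2 / ((1 + ρbar) * max σ₁ σ₂ ^ 2)) := by
  set M := max σ₁ σ₂ with hM
  have hM0 : 0 < M := lt_of_lt_of_le hσ₁ (le_max_left _ _)
  have hρb0 : (0 : ℝ) < 1 + ρbar := by linarith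
  set D := (1 + ρbar) * M ^ 2 with hD
  have hD0 : 0 < D := by positivity
  set β := max 0 ((D⁻¹ - ε) / 4) with hβdef
  have hβ0 : 0 ≤ β := le_max_left _ _
  have hβD : D⁻¹ - ε ≤ 4 * β := by
    have := le_max_right 0 ((D⁻¹ - ε) / 4); linarith
  have hβlt : β < (4 * D)⁻¹ := by
    rw [mul_inv]
    refine max_lt (by positivity) ?_
    have : 0 < D⁻¹ := by positivity
    linarith
  have hs : 0 < σ₁ + σ₂ := by linarith
  set t₁ := 2 * σ₂ / (σ₁ + σ₂) with ht₁def
  set t₂ := 2 * σ₁ / (σ₁ + σ₂) with ht₂def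
  have ht₁ : 0 < t₁ := by positivity
  have ht₂ : 0 < t₂ := by positivity
  have htsum : t₁ + t₂ = 2 := by rw [ht₁def, ht₂def, ← add_div, div_eq_iff hs.ne']; ring
  obtain ⟨w, hw⟩ := hGauss t₁ t₂
  set T := fun ω => t₁ * ξ₁ ω + t₂ * ξ₂ ω with hT
  have hTmeas : Measurable T := (hmeas₁.const_mul _).add (hmeas₂.const_mul _)
  -- integrability of squares of linear combinations
  have key : ∀ a b : ℝ, Integrable (fun ω => (a * ξ₁ ω + b * ξ₂ ω) ^ 2) P := by
    intro a b
    obtain ⟨v, hv⟩ := hGauss a b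
    have hmab : Measurable fun ω => a * ξ₁ ω + b * ξ₂ ω :=
      (hmeas₁.const_mul _).add (hmeas₂.const_mul _)
    have hint : Integrable (fun x : ℝ => x ^ 2) (gaussianReal 0 v) := by
      have h := intB v 2 0 (fun h0 => by
        have : (0 : ℝ) < v := lt_of_le_of_ne v.coe_nonneg (Ne.symm h0)
        positivity)
      simpa using h
    rw [← hv] at hint
    exact (integrable_map_measure ((continuous_pow 2).aestronglyMeasurable)
      hmab.aemeasurable).mp hint
  have hi1 : Integrable (fun ω => ξ₁ ω ^ 2) P := by
    have := key 1 0; simpa using this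
  have hi2 : Integrable (fun ω => ξ₂ ω ^ 2) P := by
    have := key 0 1; simpa using this
  have hi12 : Integrable (fun ω => ξ₁ ω * ξ₂ ω) P := by
    have h := ((key 1 1).sub (hi1.add hi2)).const_mul (1 / 2 : ℝ)
    refine h.congr (Filter.Eventually.of_forall fun ω => ?_)
    simp only [Pi.sub_apply, Pi.add_apply, one_mul]
    ring
  -- second moment of T
  have hTsq : ∫ ω, T ω ^ 2 ∂P
      = t₁ ^ 2 * σ₁ ^ 2 + 2 * t₁ * t₂ * (ρ * σ₁ * σ₂) + t₂ ^ 2 * σ₂ ^ 2 := by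
    have hEq : (fun ω => T ω ^ 2) = fun ω =>
        t₁ ^ 2 * ξ₁ ω ^ 2 + (2 * t₁ * t₂) * (ξ₁ ω * ξ₂ ω) + t₂ ^ 2 * ξ₂ ω ^ 2 := by
      funext ω; simp only [hT]; ring
    have hA : Integrable (fun ω => t₁ ^ 2 * ξ₁ ω ^ 2) P := hi1.const_mul _
    have hB : Integrable (fun ω => 2 * t₁ * t₂ * (ξ₁ ω * ξ₂ ω)) P := hi12.const_mul _
    have hC : Integrable (fun ω => t₂ ^ 2 * ξ₂ ω ^ 2) P := hi2.const_mul _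
    have hAB : Integrable (fun ω => t₁ ^ 2 * ξ₁ ω ^ 2 + 2 * t₁ * t₂ * (ξ₁ ω * ξ₂ ω)) P :=
      hA.add hB
    rw [hEq, integral_add hAB hC, integral_add hA hB,
      integral_const_mul, integral_const_mul, integral_const_mul, hvar₁, hvar₂, hcorr]
  have hwT : ∫ ω, T ω ^ 2 ∂P = (w : ℝ) := by
    rw [← intC w, ← hw,
      integral_map (μ := P) hTmeas.aemeasurable ((continuous_pow 2).aestronglyMeasurable)]
  have hvT : (w : ℝ) = t₁ ^ 2 * σ₁ ^ 2 + 2 * t₁ * t₂ * (ρ * σ₁ * σ₂) + t₂ ^ 2 * σ₂ ^ 2 := by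
    rw [← hwT, hTsq]
  have hw2D : (w : ℝ) ≤ 2 * D := by
    rw [hvT]
    have h1 : t₁ ^ 2 * σ₁ ^ 2 + 2 * t₁ * t₂ * (ρ * σ₁ * σ₂) + t₂ ^ 2 * σ₂ ^ 2
        = 8 * (1 + ρ) * σ₁ ^ 2 * σ₂ ^ 2 / (σ₁ + σ₂) ^ 2 := by
      rw [ht₁def, ht₂def]; field_simp; ring
    rw [h1, div_le_iff₀ (by positivity), hD]
    have hint1 : (0:ℝ) ≤ (ρbar - ρ) * σ₁ ^ 2 * σ₂ ^ 2 :=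
      mul_nonneg (mul_nonneg (sub_nonneg.2 hρub) (sq_nonneg σ₁)) (sq_nonneg σ₂)
    rcases max_cases σ₁ σ₂ with ⟨hMe, hle⟩ | ⟨hMe, hle⟩ <;> rw [hM, hMe]
    · have hint2 : (0:ℝ) ≤ (1 + ρbar) * σ₁ ^ 2 * (σ₁ - σ₂) * (σ₁ + 3 * σ₂) :=
        mul_nonneg (mul_nonneg (mul_nonneg hρb0.le (sq_nonneg σ₁)) (sub_nonneg.2 hle))
          (by linarith)
      nlinarith [hint1, hint2]
    · have hint2 : (0:ℝ) ≤ (1 + ρbar) * σ₂ ^ 2 * (σ₂ - σ₁) * (σ₂ + 3 * σ₁) :=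
        mul_nonneg (mul_nonneg (mul_nonneg hρb0.le (sq_nonneg σ₂)) (by linarith : (0:ℝ) ≤ σ₂ - σ₁))
          (by linarith)
      nlinarith [hint1, hint2]
  have hβw : (w : ℝ) ≠ 0 → β < (2 * (w : ℝ))⁻¹ := by
    intro h0
    have hwpos : (0 : ℝ) < w := lt_of_le_of_ne w.coe_nonneg (Ne.symm h0)
    have h2w : 2 * (w : ℝ) ≤ 4 * D := by linarith
    calc β < (4 * D)⁻¹ := hβlt
      _ ≤ (2 * (w : ℝ))⁻¹ := by
        apply inv_anti₀ (by positivity) h2w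
  -- integrability of the dominating function
  have hKint : Integrable (fun ω => T ω ^ (2 * m) * Real.exp (β * T ω ^ 2)) P := by
    have hint := intB w (2 * m) β hβw
    rw [← hw] at hint
    exact (integrable_map_measure
      (((continuous_pow (2 * m)).mul
        (Real.continuous_exp.comp (continuous_const.mul (continuous_pow 2)))).aestronglyMeasurable)
      hTmeas.aemeasurable).mp hint
  set K := ∫ ω, T ω ^ (2 * m) * Real.exp (β * T ω ^ 2) ∂P with hK
  have hK0 : 0 ≤ K := by
    apply integral_nonneg
    intro ω
    have : (0 : ℝ) ≤ T ω ^ (2 * m) := by rw [pow_mul]; positivity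
    exact mul_nonneg this (Real.exp_pos _).le
  set c := (4 * t₁ * t₂)⁻¹ with hc
  have hc0 : 0 < c := by positivity
  refine ⟨c ^ m * K, ?_⟩
  filter_upwards [eventually_ge_atTop (0 : ℝ)] with u hu
  have hpt : ∀ ω, (ξ₁ ω * ξ₂ ω) ^ m *
      Set.indicator {ω | u ≤ ξ₁ ω ∧ u ≤ ξ₂ ω} (fun _ => (1 : ℝ)) ω ≤
      (c ^ m * Real.exp (-(4 * β) * u ^ 2)) * (T ω ^ (2 * m) * Real.exp (β * T ω ^ 2)) := by
    intro ω
    by_cases hω : ω ∈ {ω | u ≤ ξ₁ ω ∧ u ≤ ξ₂ ω}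
    · rw [Set.indicator_of_mem hω, mul_one]
      obtain ⟨h1, h2⟩ := hω
      have hx1 : 0 ≤ ξ₁ ω := le_trans hu h1
      have hx2 : 0 ≤ ξ₂ ω := le_trans hu h2
      have hprod : 0 ≤ ξ₁ ω * ξ₂ ω := mul_nonneg hx1 hx2
      have hTω : 2 * u ≤ T ω := by
        have e1 : t₁ * u ≤ t₁ * ξ₁ ω := mul_le_mul_of_nonneg_left h1 ht₁.le
        have e2 : t₂ * u ≤ t₂ * ξ₂ ω := mul_le_mul_of_nonneg_left h2 ht₂.le
        have : (t₁ + t₂) * u = 2 * u := by rw [htsum]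
        simp only [hT]; nlinarith
      have hT0 : 0 ≤ T ω := le_trans (by linarith) hTω
      have hamgm : ξ₁ ω * ξ₂ ω ≤ c * T ω ^ 2 := by
        rw [hc, inv_mul_eq_div, le_div_iff₀ (by positivity)]
        simp only [hT]
        nlinarith [sq_nonneg (t₁ * ξ₁ ω - t₂ * ξ₂ ω)]
      have e1 : (ξ₁ ω * ξ₂ ω) ^ m ≤ c ^ m * T ω ^ (2 * m) := by
        calc (ξ₁ ω * ξ₂ ω) ^ m ≤ (c * T ω ^ 2) ^ m := pow_le_pow_left₀ hprod hamgm m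
          _ = c ^ m * T ω ^ (2 * m) := by rw [mul_pow, ← pow_mul]
      have hT4u : 4 * u ^ 2 ≤ T ω ^ 2 := by
        have := pow_le_pow_left₀ (by linarith : (0:ℝ) ≤ 2 * u) hTω 2
        nlinarith
      have e2 : (1 : ℝ) ≤ Real.exp (-(4 * β) * u ^ 2) * Real.exp (β * T ω ^ 2) := by
        rw [← Real.exp_add, ← Real.exp_zero]
        apply Real.exp_le_exp.mpr
        nlinarith [mul_le_mul_of_nonneg_left hT4u hβ0]
      calc (ξ₁ ω * ξ₂ ω) ^ m = (ξ₁ ω * ξ₂ ω) ^ m * 1 := (mul_one _).symm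
        _ ≤ (c ^ m * T ω ^ (2 * m)) *
            (Real.exp (-(4 * β) * u ^ 2) * Real.exp (β * T ω ^ 2)) := by
          apply mul_le_mul e1 e2 zero_le_one
          have h0T : (0 : ℝ) ≤ T ω ^ (2 * m) := by rw [pow_mul]; positivity
          exact mul_nonneg (pow_nonneg hc0.le m) h0T
        _ = (c ^ m * Real.exp (-(4 * β) * u ^ 2)) * (T ω ^ (2 * m) * Real.exp (β * T ω ^ 2)) := by
          ring
    · rw [Set.indicator_of_notMem hω, mul_zero]
      have h0T : (0 : ℝ) ≤ T ω ^ (2 * m) := by rw [pow_mul]; positivity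
      exact mul_nonneg (mul_nonneg (pow_nonneg hc0.le m) (Real.exp_pos _).le)
        (mul_nonneg h0T (Real.exp_pos _).le)
  have hfnn : ∀ ω, 0 ≤ (ξ₁ ω * ξ₂ ω) ^ m *
      Set.indicator {ω | u ≤ ξ₁ ω ∧ u ≤ ξ₂ ω} (fun _ => (1 : ℝ)) ω := by
    intro ω
    by_cases hω : ω ∈ {ω | u ≤ ξ₁ ω ∧ u ≤ ξ₂ ω}
    · rw [Set.indicator_of_mem hω, mul_one]
      exact pow_nonneg (mul_nonneg (le_trans hu hω.1) (le_trans hu hω.2)) m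
    · rw [Set.indicator_of_notMem hω, mul_zero]
  calc ∫ ω, (ξ₁ ω * ξ₂ ω) ^ m *
        Set.indicator {ω | u ≤ ξ₁ ω ∧ u ≤ ξ₂ ω} (fun _ => (1 : ℝ)) ω ∂P
      ≤ ∫ ω, (c ^ m * Real.exp (-(4 * β) * u ^ 2)) *
          (T ω ^ (2 * m) * Real.exp (β * T ω ^ 2)) ∂P :=
        integral_mono_of_nonneg (Filter.Eventually.of_forall hfnn)
          (hKint.const_mul _) (Filter.Eventually.of_forall hpt)
    _ = (c ^ m * Real.exp (-(4 * β) * u ^ 2)) * K := by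
        rw [integral_const_mul]
    _ ≤ (c ^ m * K) * Real.exp (ε * u ^ 2 - u ^ 2 / D) := by
        rw [show (c ^ m * Real.exp (-(4 * β) * u ^ 2)) * K
            = (c ^ m * K) * Real.exp (-(4 * β) * u ^ 2) by ring]
        apply mul_le_mul_of_nonneg_left _ (mul_nonneg (pow_nonneg hc0.le m) hK0)
        apply Real.exp_le_exp.mpr
        rw [div_eq_mul_inv]
        nlinarith [mul_nonneg (sq_nonneg u) (by linarith : (0:ℝ) ≤ 4 * β - (D⁻¹ - ε))]
end

section
/- Laplace method for an interior maximum: let T ⊂ R^N be compact, t₀ an interior point of T, g continuous on T with g(t₀) ≠ 0, h ∈ C²(T) attaining its unique minimum over T at t₀, with ∇h(t₀)=0 and ∇²h(t₀) positive definite. Then as u → ∞, ∫_T g(t) e^{−u h(t)} dt = (2π)^{N/2} u^{−N/2} (det ∇²h(t₀))^{−1/2} g(t₀) e^{−u h(t₀)} (1 + o(1)). -/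
open MeasureTheory Filter Asymptotics

open Real Matrix Topology

set_option maxHeartbeats 1000000

open scoped MatrixOrder in
noncomputable def Matrix.PosSemidef.sqrt {n : Type*} [Fintype n] [DecidableEq n] {A : Matrix n n ℝ}
    (_hA : A.PosSemidef) : Matrix n n ℝ :=
  CFC.sqrt A

open scoped MatrixOrder in
lemma Matrix.PosSemidef.posSemidef_sqrt {n : Type*} [Fintype n] [DecidableEq n] {A : Matrix n n ℝ}
    (hA : A.PosSemidef) : hA.sqrt.PosSemidef :=
  Matrix.nonneg_iff_posSemidef.1 (CFC.sqrt_nonneg A)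

open scoped MatrixOrder in
lemma Matrix.PosSemidef.sqrt_mul_self {n : Type*} [Fintype n] [DecidableEq n] {A : Matrix n n ℝ}
    (hA : A.PosSemidef) : hA.sqrt * hA.sqrt = A :=
  CFC.sqrt_mul_sqrt_self A hA.nonneg

namespace LaplaceMethodAux

noncomputable section

variable {N : ℕ}

/-- The quadratic form associated to a matrix. -/
def Q (H : Matrix (Fin N) (Fin N) ℝ) (v : EuclideanSpace ℝ (Fin N)) : ℝ :=
  ∑ i, ∑ j, v i * (H i j * v j)

lemma Q_smul (H : Matrix (Fin N) (Fin N) ℝ) (c : ℝ) (v : EuclideanSpace ℝ (Fin N)) :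
    Q H (c • v) = c ^ 2 * Q H v := by
  simp only [Q, Finset.mul_sum]
  refine Finset.sum_congr rfl fun i _ => Finset.sum_congr rfl fun j _ => ?_
  have h1 : (c • v) i = c * v i := rfl
  have h2 : (c • v) j = c * v j := rfl
  rw [h1, h2]; ring

lemma Q_eq_dot (H : Matrix (Fin N) (Fin N) ℝ) (v : EuclideanSpace ℝ (Fin N)) :
    Q H v = dotProduct (fun i => v i) (H.mulVec fun i => v i) := by
  simp only [Q, dotProduct, Matrix.mulVec, Finset.mul_sum]

lemma Q_pos {H : Matrix (Fin N) (Fin N) ℝ} (hH : H.PosDef) {v : EuclideanSpace ℝ (Fin N)}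
    (hv : v ≠ 0) : 0 < Q H v := by
  rw [Q_eq_dot]
  have hv' : (fun i => v i : Fin N → ℝ) ≠ 0 := by
    intro h
    apply hv
    ext i
    exact congrFun h i
  simpa using hH.dotProduct_mulVec_pos hv'

lemma Q_zero (H : Matrix (Fin N) (Fin N) ℝ) : Q H (0 : EuclideanSpace ℝ (Fin N)) = 0 := by
  have : ∀ i, (0 : EuclideanSpace ℝ (Fin N)) i = 0 := fun _ => rfl
  simp [Q, this]

lemma continuous_Q (H : Matrix (Fin N) (Fin N) ℝ) : Continuous (Q H) := by
  refine continuous_finset_sum _ fun i _ => continuous_finset_sum _ fun j _ => ?_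
  have hi : Continuous fun v : EuclideanSpace ℝ (Fin N) => v i := PiLp.continuous_apply 2 _ i
  have hj : Continuous fun v : EuclideanSpace ℝ (Fin N) => v j := PiLp.continuous_apply 2 _ j
  exact hi.mul (continuous_const.mul hj)

lemma Q_lower {H : Matrix (Fin N) (Fin N) ℝ} (hH : H.PosDef) :
    ∃ lam > 0, ∀ v : EuclideanSpace ℝ (Fin N), lam * ‖v‖ ^ 2 ≤ Q H v := by
  rcases Nat.eq_zero_or_pos N with hN | hN
  · refine ⟨1, one_pos, fun v => ?_⟩
    have hv : v = 0 := by ext i; exact absurd i.isLt (by omega)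
    simp [hv, Q_zero]
  · have hnt : Nontrivial (EuclideanSpace ℝ (Fin N)) := by
      refine ⟨EuclideanSpace.single ⟨0, hN⟩ 1, 0, fun hcon => ?_⟩
      have := congrFun (congrArg (fun x : EuclideanSpace ℝ (Fin N) => (x : ∀ _ : Fin N, ℝ)) hcon) ⟨0, hN⟩
      simp [EuclideanSpace.single_apply] at this
    obtain ⟨v₀, hv₀mem, hmin⟩ := (isCompact_sphere (0 : EuclideanSpace ℝ (Fin N)) 1).exists_isMinOn
      (NormedSpace.sphere_nonempty.2 zero_le_one) (continuous_Q H).continuousOn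
    have hv₀ : ‖v₀‖ = 1 := by simpa using mem_sphere_zero_iff_norm.1 hv₀mem
    have hv₀ne : v₀ ≠ 0 := by intro hcon; rw [hcon] at hv₀; simp at hv₀
    refine ⟨Q H v₀, Q_pos hH hv₀ne, fun v => ?_⟩
    rcases eq_or_ne v 0 with rfl | hv
    · simp [Q_zero]
    · have hnv : (0:ℝ) < ‖v‖ := norm_pos_iff.2 hv
      set w : EuclideanSpace ℝ (Fin N) := ‖v‖⁻¹ • v with hw
      have hwmem : w ∈ Metric.sphere (0 : EuclideanSpace ℝ (Fin N)) 1 := by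
        simp [hw, norm_smul, abs_of_pos (inv_pos.2 hnv), inv_mul_cancel₀ hnv.ne']
      have h1 : Q H v₀ ≤ Q H w := hmin hwmem
      have h2 : Q H v = ‖v‖ ^ 2 * Q H w := by
        rw [hw, Q_smul]
        field_simp
      rw [h2]
      calc Q H v₀ * ‖v‖ ^ 2 ≤ Q H w * ‖v‖ ^ 2 := by nlinarith
        _ = ‖v‖ ^ 2 * Q H w := by ring


lemma integrable_gauss {b : ℝ} (hb : 0 < b) :
    Integrable (fun v : EuclideanSpace ℝ (Fin N) => Real.exp (-b * ‖v‖ ^ 2)) := by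
  have h := (GaussianFourier.integrable_cexp_neg_mul_sq_norm_add
    (V := EuclideanSpace ℝ (Fin N)) (b := (b : ℂ)) (by simpa using hb) 0 0).norm
  refine h.congr (Filter.Eventually.of_forall fun v => ?_)
  simp [Complex.norm_exp]
  left
  rw [← Complex.ofReal_pow, Complex.ofReal_re]

lemma Q_eq_norm_sq (H : Matrix (Fin N) (Fin N) ℝ) (hH : H.PosDef)
    (v : EuclideanSpace ℝ (Fin N)) :
    Q H v = ‖Matrix.toEuclideanLin hH.posSemidef.sqrt v‖ ^ 2 := by
  set S := hH.posSemidef.sqrt with hSdef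
  have hSherm : S.IsHermitian := hH.posSemidef.posSemidef_sqrt.1
  have hSS : S * S = H := hH.posSemidef.sqrt_mul_self
  rw [Q_eq_dot, ← hSS]
  have happ : ∀ i, (Matrix.toEuclideanLin S v) i = S.mulVec (fun j => v j) i := fun i => rfl
  rw [← real_inner_self_eq_norm_sq, PiLp.inner_apply]
  simp only [happ, RCLike.inner_apply, conj_trivial]
  rw [show ((S * S).mulVec fun i => v i) = S.mulVec (S.mulVec fun i => v i) by
    rw [Matrix.mulVec_mulVec]]
  rw [Matrix.dotProduct_mulVec]
  have hvec : Matrix.vecMul (fun i => v i) S = S.mulVec fun i => v i := by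
    have h1 := Matrix.vecMul_transpose (A := S) (x := fun i => v i)
    have h2 : Sᵀ = S := by
      rw [← Matrix.conjTranspose_eq_transpose_of_trivial]; exact hSherm
    rw [← h1, h2]
  rw [hvec]
  simp [dotProduct, mul_comm]


lemma det_sqrt {H : Matrix (Fin N) (Fin N) ℝ} (hH : H.PosDef) :
    0 < hH.posSemidef.sqrt.det ∧ hH.posSemidef.sqrt.det ^ 2 = H.det := by
  have hSS : hH.posSemidef.sqrt * hH.posSemidef.sqrt = H := hH.posSemidef.sqrt_mul_self
  have hsq : hH.posSemidef.sqrt.det ^ 2 = H.det := by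
    rw [pow_two, ← Matrix.det_mul, hSS]
  have hnn : 0 ≤ hH.posSemidef.sqrt.det := by
    have hherm : hH.posSemidef.sqrt.IsHermitian := hH.posSemidef.posSemidef_sqrt.1
    rw [hherm.det_eq_prod_eigenvalues]
    exact Finset.prod_nonneg fun i _ => hH.posSemidef.posSemidef_sqrt.eigenvalues_nonneg i
  have hne : hH.posSemidef.sqrt.det ≠ 0 := by
    intro h0
    rw [h0] at hsq
    have := hH.det_pos
    simp at hsq
    rw [← hsq] at this
    exact lt_irrefl _ this
  exact ⟨lt_of_le_of_ne hnn (Ne.symm hne), hsq⟩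

lemma integral_gauss_Q (H : Matrix (Fin N) (Fin N) ℝ) (hH : H.PosDef) :
    ∫ v : EuclideanSpace ℝ (Fin N), Real.exp (-(Q H v) / 2)
      = (2 * π) ^ ((N : ℝ) / 2) * H.det ^ (-(1 : ℝ) / 2) := by
  set S := hH.posSemidef.sqrt with hSdef
  obtain ⟨hdetpos, hdetsq⟩ := det_sqrt hH
  set L : EuclideanSpace ℝ (Fin N) →ₗ[ℝ] EuclideanSpace ℝ (Fin N) := Matrix.toEuclideanLin S
    with hLdef
  have hdetL : LinearMap.det L = S.det := by
    rw [hLdef, Matrix.toEuclideanLin_eq_toLin_orthonormal]; exact LinearMap.det_toLin _ S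
  have hdet_ne : LinearMap.det L ≠ 0 := by rw [hdetL]; exact hdetpos.ne'
  have hLcont : Continuous L := L.continuous_of_finiteDimensional
  set f : EuclideanSpace ℝ (Fin N) → ℝ := fun x => Real.exp (-(1/2 : ℝ) * ‖x‖ ^ 2) with hfdef
  have hfcont : Continuous f := by
    apply Real.continuous_exp.comp
    exact (continuous_const.mul ((continuous_norm).pow 2))
  have hQ : (fun v : EuclideanSpace ℝ (Fin N) => Real.exp (-(Q H v) / 2))
      = fun v => f (L v) := by
    funext v
    rw [hfdef]
    simp only
    rw [Q_eq_norm_sq H hH v]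
    congr 1
    ring
  rw [hQ]
  have hmap : Measure.map L (volume : Measure (EuclideanSpace ℝ (Fin N)))
      = ENNReal.ofReal |(LinearMap.det L)⁻¹| • volume :=
    Measure.map_linearMap_addHaar_eq_smul_addHaar volume hdet_ne
  have h1 : ∫ v, f (L v) = ∫ x, f x ∂(Measure.map L volume) :=
    (integral_map hLcont.aemeasurable hfcont.aestronglyMeasurable).symm
  rw [h1, hmap, integral_smul_measure, ENNReal.toReal_ofReal (abs_nonneg _)]
  have h2 : ∫ x : EuclideanSpace ℝ (Fin N), f x = (π / (1/2 : ℝ)) ^ ((N : ℝ) / 2) := by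
    rw [hfdef]
    simp only
    rw [GaussianFourier.integral_rexp_neg_mul_sq_norm (by norm_num : (0:ℝ) < 1/2)]
    norm_num [finrank_euclideanSpace_fin]
  rw [h2, hdetL]
  have hSdetval : S.det = H.det ^ ((1:ℝ)/2) := by
    have := Real.sqrt_sq hdetpos.le
    rw [hdetsq] at this
    rw [← this, Real.sqrt_eq_rpow]
  rw [hSdetval]
  rw [abs_of_pos (inv_pos.2 (Real.rpow_pos_of_pos hH.det_pos _))]
  rw [← Real.rpow_neg hH.det_pos.le]
  rw [show π / (1/2 : ℝ) = 2 * π by ring, show -((1:ℝ)/2) = -(1:ℝ)/2 by ring, smul_eq_mul]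
  ring

lemma sum_single (v : EuclideanSpace ℝ (Fin N)) :
    ∑ i, v i • EuclideanSpace.single i (1 : ℝ) = v := by
  have := (EuclideanSpace.basisFun (Fin N) ℝ).sum_repr v
  simpa [EuclideanSpace.basisFun_apply, EuclideanSpace.basisFun_repr] using this

lemma bilin_eq (B : EuclideanSpace ℝ (Fin N) →L[ℝ] EuclideanSpace ℝ (Fin N) →L[ℝ] ℝ)
    (H : Matrix (Fin N) (Fin N) ℝ)
    (hB : ∀ i j, B (EuclideanSpace.single i 1) (EuclideanSpace.single j 1) = H i j)
    (v : EuclideanSpace ℝ (Fin N)) : B v v = Q H v := by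
  have h1 : B v = ∑ i, v i • B (EuclideanSpace.single i 1) := by
    conv_lhs => rw [← sum_single v]
    rw [map_sum]
    exact Finset.sum_congr rfl fun i _ => by rw [B.map_smul]
  have h2 : ∀ i, B (EuclideanSpace.single i 1) v = ∑ j, v j * H i j := by
    intro i
    conv_lhs => rw [← sum_single v]
    rw [map_sum]
    exact Finset.sum_congr rfl fun j _ => by
      rw [(B (EuclideanSpace.single i 1)).map_smul, smul_eq_mul, hB]
  rw [h1, ContinuousLinearMap.sum_apply]
  unfold Q
  refine Finset.sum_congr rfl fun i _ => ?_
  rw [ContinuousLinearMap.smul_apply, smul_eq_mul, h2 i, Finset.mul_sum]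
  exact Finset.sum_congr rfl fun j _ => by ring

lemma taylor_aux {h : EuclideanSpace ℝ (Fin N) → ℝ} {t₀ : EuclideanSpace ℝ (Fin N)} {r₀ : ℝ}
    (hr₀ : 0 < r₀)
    (hd : ∀ x ∈ Metric.ball t₀ r₀, HasFDerivAt h (fderiv ℝ h x) x)
    (hf'' : HasFDerivAt (fderiv ℝ h) (fderiv ℝ (fderiv ℝ h) t₀) t₀)
    (hgrad : fderiv ℝ h t₀ = 0)
    (hsymm : ∀ v w, fderiv ℝ (fderiv ℝ h) t₀ v w = fderiv ℝ (fderiv ℝ h) t₀ w v) :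
    (fun v => h (t₀ + v) - h t₀ - fderiv ℝ (fderiv ℝ h) t₀ v v / 2)
      =o[𝓝 0] fun v => ‖v‖ ^ 2 := by
  set f'' := fderiv ℝ (fderiv ℝ h) t₀ with hf''def
  rw [Asymptotics.isLittleO_iff]
  intro ε hε
  have hA : (fun v => fderiv ℝ h (t₀ + v) - f'' v) =o[𝓝 0] fun v => v := by
    have := hasFDerivAt_iff_isLittleO_nhds_zero.1 hf''
    simpa [hgrad] using this
  rw [Asymptotics.isLittleO_iff] at hA
  have hA' := hA hε
  rw [Metric.eventually_nhds_iff] at hA'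
  obtain ⟨δ₀, hδ₀pos, hδ₀⟩ := hA'
  set δ := min δ₀ r₀ with hδdef
  have hδpos : 0 < δ := lt_min hδ₀pos hr₀
  rw [Metric.eventually_nhds_iff]
  refine ⟨δ, hδpos, fun {v} hv => ?_⟩
  rw [dist_zero_right] at hv
  -- the function k and its derivative
  set k : EuclideanSpace ℝ (Fin N) → ℝ := fun w => h (t₀ + w) - f'' w w / 2 with hkdef
  have hkderiv : ∀ w ∈ Metric.closedBall (0 : EuclideanSpace ℝ (Fin N)) ‖v‖,
      HasFDerivWithinAt k (fderiv ℝ h (t₀ + w) - f'' w)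
        (Metric.closedBall (0 : EuclideanSpace ℝ (Fin N)) ‖v‖) w := by
    intro w hw
    rw [Metric.mem_closedBall, dist_zero_right] at hw
    have hwball : t₀ + w ∈ Metric.ball t₀ r₀ := by
      rw [Metric.mem_ball, dist_eq_norm]
      simpa using lt_of_le_of_lt hw (lt_of_lt_of_le hv (min_le_right _ _))
    have h1 : HasFDerivAt (fun w' => h (t₀ + w')) (fderiv ℝ h (t₀ + w)) w := by
      have hcomp := (hd _ hwball).comp w ((hasFDerivAt_id w).const_add t₀)
      exact hcomp
    have h2 : HasFDerivAt (fun w' : EuclideanSpace ℝ (Fin N) => f'' w' w' / 2) (f'' w) w := by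
      have hb := (f''.hasFDerivAt (x := w)).clm_apply (hasFDerivAt_id w)
      have hb2 := hb.const_mul ((2:ℝ)⁻¹)
      have heq : (fun y : EuclideanSpace ℝ (Fin N) => (2:ℝ)⁻¹ * (f'' y (id y)))
          = fun w' => f'' w' w' / 2 := by
        funext y
        simp only [id_eq]
        ring
      rw [heq] at hb2
      refine hb2.congr_fderiv (Eq.symm ?_)
      refine ContinuousLinearMap.ext fun z => ?_
      simp only [ContinuousLinearMap.coe_smul', Pi.smul_apply, ContinuousLinearMap.add_apply,
        ContinuousLinearMap.coe_comp', Function.comp_apply, ContinuousLinearMap.coe_id', id_eq,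
        ContinuousLinearMap.flip_apply, smul_eq_mul]
      rw [hsymm w z]
      ring
    exact (h1.sub h2).hasFDerivWithinAt
  have hbound : ∀ w ∈ Metric.closedBall (0 : EuclideanSpace ℝ (Fin N)) ‖v‖,
      ‖fderiv ℝ h (t₀ + w) - f'' w‖ ≤ ε * ‖v‖ := by
    intro w hw
    rw [Metric.mem_closedBall, dist_zero_right] at hw
    have hwd : dist w 0 < δ₀ := by
      rw [dist_zero_right]
      exact lt_of_le_of_lt hw (lt_of_lt_of_le hv (min_le_left _ _))
    have := hδ₀ hwd
    calc ‖fderiv ℝ h (t₀ + w) - f'' w‖ ≤ ε * ‖w‖ := by simpa using this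
      _ ≤ ε * ‖v‖ := mul_le_mul_of_nonneg_left hw hε.le
  have hmem0 : (0 : EuclideanSpace ℝ (Fin N)) ∈ Metric.closedBall (0 : EuclideanSpace ℝ (Fin N)) ‖v‖ :=
    Metric.mem_closedBall_self (norm_nonneg v)
  have hmemv : v ∈ Metric.closedBall (0 : EuclideanSpace ℝ (Fin N)) ‖v‖ := by
    rw [Metric.mem_closedBall, dist_zero_right]
  have hmvt := Convex.norm_image_sub_le_of_norm_hasFDerivWithin_le hkderiv hbound
    (convex_closedBall _ _) hmem0 hmemv
  have hk0 : k 0 = h t₀ := by simp [hkdef]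
  have hkv : k v = h (t₀ + v) - f'' v v / 2 := rfl
  rw [hk0, hkv] at hmvt
  calc ‖h (t₀ + v) - h t₀ - f'' v v / 2‖ = ‖h (t₀ + v) - f'' v v / 2 - h t₀‖ := by ring_nf
    _ ≤ ε * ‖v‖ * ‖v - 0‖ := hmvt
    _ ≤ ε * ‖‖v‖ ^ 2‖ := by
        rw [sub_zero]
        rw [norm_of_nonneg (by positivity : (0:ℝ) ≤ ‖v‖ ^ 2)]
        nlinarith [norm_nonneg v]

end

end LaplaceMethodAux

open LaplaceMethodAux

/-- Laplace method for an interior minimum point: if `h` attains its unique minimum over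
the compact set `T` at the interior point `t₀` with `∇h(t₀) = 0` and positive definite
Hessian `H`, and `g` is continuous with `g(t₀) ≠ 0`, then as `u → ∞`,
`∫_T g e^{-u h} = (2π)^{N/2} u^{-N/2} (det H)^{-1/2} g(t₀) e^{-u h(t₀)} (1 + o(1))`. -/
theorem laplace_method_interior (N : ℕ)
    (T : Set (EuclideanSpace ℝ (Fin N))) (hT : IsCompact T)
    (t₀ : EuclideanSpace ℝ (Fin N)) (ht₀ : t₀ ∈ interior T)
    (g h : EuclideanSpace ℝ (Fin N) → ℝ)
    (hg : ContinuousOn g T) (hg0 : g t₀ ≠ 0)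
    (hh : ContDiffOn ℝ 2 h T)
    (hmin : ∀ t ∈ T, t ≠ t₀ → h t₀ < h t)
    (hgrad : fderiv ℝ h t₀ = 0)
    (H : Matrix (Fin N) (Fin N) ℝ)
    (hH : ∀ i j, H i j =
      fderiv ℝ (fun t => fderiv ℝ h t (EuclideanSpace.single j (1 : ℝ))) t₀
        (EuclideanSpace.single i (1 : ℝ)))
    (hHpd : H.PosDef) :
    (fun u : ℝ => ∫ t in T, g t * Real.exp (-u * h t)) ~[atTop]
      fun u : ℝ => (2 * Real.pi) ^ ((N : ℝ) / 2) * u ^ (-(N : ℝ) / 2) *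
        H.det ^ (-(1 : ℝ) / 2) * g t₀ * Real.exp (-u * h t₀) := by
  classical
  have hTmeas : MeasurableSet T := hT.measurableSet
  have hTnhds : T ∈ 𝓝 t₀ := mem_interior_iff_mem_nhds.mp ht₀
  have ht₀T : t₀ ∈ T := interior_subset ht₀
  have hC2 : ContDiffAt ℝ 2 h t₀ := hh.contDiffAt hTnhds
  set b := h t₀ with hbdef
  -- derivative facts
  have hdiff : ∀ x ∈ interior T, HasFDerivAt h (fderiv ℝ h x) x := by
    intro x hx
    have hx' : T ∈ 𝓝 x := Filter.mem_of_superset (isOpen_interior.mem_nhds hx) interior_subset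
    exact ((hh.contDiffAt hx').differentiableAt (by norm_num)).hasFDerivAt
  have hf''at : HasFDerivAt (fderiv ℝ h) (fderiv ℝ (fderiv ℝ h) t₀) t₀ :=
    ((hC2.fderiv_right (m := 1) (by norm_num)).differentiableAt (by norm_num)).hasFDerivAt
  have hsymm : ∀ v w, fderiv ℝ (fderiv ℝ h) t₀ v w = fderiv ℝ (fderiv ℝ h) t₀ w v :=
    (hC2.isSymmSndFDerivAt (by norm_num)).eq
  obtain ⟨r₀, hr₀pos, hball⟩ := Metric.mem_nhds_iff.1 (isOpen_interior.mem_nhds ht₀)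
  -- Hessian identification
  have hHf : ∀ i j, fderiv ℝ (fderiv ℝ h) t₀ (EuclideanSpace.single i 1)
      (EuclideanSpace.single j 1) = H i j := by
    intro i j
    have h1 : HasFDerivAt (fun t => fderiv ℝ h t (EuclideanSpace.single j (1:ℝ)))
        ((ContinuousLinearMap.apply ℝ ℝ (EuclideanSpace.single j (1:ℝ))).comp
          (fderiv ℝ (fderiv ℝ h) t₀)) t₀ :=
      ((ContinuousLinearMap.apply ℝ ℝ (EuclideanSpace.single j (1:ℝ))).hasFDerivAt).comp t₀ hf''at
    rw [hH i j, h1.fderiv]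
    rfl
  have hQf : ∀ v, fderiv ℝ (fderiv ℝ h) t₀ v v = Q H v :=
    fun v => bilin_eq _ H hHf v
  -- Taylor expansion
  have hR : (fun v => h (t₀ + v) - b - Q H v / 2) =o[𝓝 0]
      (fun v : EuclideanSpace ℝ (Fin N) => ‖v‖ ^ 2) := by
    have := taylor_aux hr₀pos (fun x hx => hdiff x (hball hx)) hf''at hgrad hsymm
    simpa only [hQf] using this
  -- quadratic lower bound
  obtain ⟨lam, hlam_pos, hlam⟩ := Q_lower hHpd
  have hsmall := (Asymptotics.isLittleO_iff.1 hR) (show (0:ℝ) < lam/4 by linarith)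
  rw [Metric.eventually_nhds_iff] at hsmall
  obtain ⟨r₁, hr₁pos, hr₁⟩ := hsmall
  set r := min r₁ r₀ with hrdef
  have hrpos : 0 < r := lt_min hr₁pos hr₀pos
  have hψlower : ∀ v : EuclideanSpace ℝ (Fin N), ‖v‖ < r → lam/4 * ‖v‖^2 ≤ h (t₀ + v) - b := by
    intro v hv
    have h1 := hr₁ (show dist v 0 < r₁ by
      rw [dist_zero_right]; exact hv.trans_le (min_le_left _ _))
    rw [Real.norm_eq_abs, Real.norm_eq_abs, abs_of_nonneg (by positivity : (0:ℝ) ≤ ‖v‖^2)] at h1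
    have h1' := (abs_le.1 h1).1
    have h2 := hlam v
    linarith
  -- bound on g
  obtain ⟨M, hM⟩ := hT.exists_bound_of_continuousOn hg
  have hM0 : 0 ≤ M := le_trans (norm_nonneg _) (hM t₀ ht₀T)
  -- diameter bound
  obtain ⟨D, hDpos, hD⟩ := hT.isBounded.subset_closedBall_lt 0 t₀
  -- positive minimum away from t₀
  have hψδ : ∃ δ > 0, ∀ t ∈ T, r ≤ ‖t - t₀‖ → δ ≤ h t - b := by
    set K := T \ Metric.ball t₀ r with hK
    have hKcomp : IsCompact K := hT.diff Metric.isOpen_ball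
    rcases K.eq_empty_or_nonempty with hKe | hKne
    · refine ⟨1, one_pos, fun t ht hrt => ?_⟩
      exfalso
      have htK : t ∈ K := ⟨ht, fun hmem => by
        rw [Metric.mem_ball, dist_eq_norm] at hmem; linarith⟩
      rw [hKe] at htK
      exact Set.notMem_empty t htK
    · obtain ⟨tm, htmK, htm⟩ := hKcomp.exists_isMinOn hKne
        (hh.continuousOn.mono Set.diff_subset)
      have htmT : tm ∈ T := htmK.1
      have htm_ne : tm ≠ t₀ := by
        intro hcon
        exact htmK.2 (by rw [hcon]; exact Metric.mem_ball_self hrpos)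
      refine ⟨h tm - b, by have := hmin tm htmT htm_ne; linarith, fun t ht hrt => ?_⟩
      have htK : t ∈ K := ⟨ht, fun hmem => by
        rw [Metric.mem_ball, dist_eq_norm] at hmem; linarith⟩
      have h10 := htm htK
      simp only [Set.mem_setOf_eq] at h10
      linarith
  obtain ⟨δ, hδpos, hδ⟩ := hψδ
  set c' := min (lam/4) (δ / D^2) with hc'def
  have hc'pos : 0 < c' := lt_min (by linarith) (div_pos hδpos (by positivity))
  -- the rescaled family
  set F : ℝ → EuclideanSpace ℝ (Fin N) → ℝ := fun u s =>
    Set.indicator T (fun t => g t * Real.exp (-u * (h t - b)))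
      (t₀ + u ^ (-(1:ℝ)/2) • s) with hFdef
  -- basic rpow facts
  have hcusq : ∀ u : ℝ, 0 < u → (u ^ (-(1:ℝ)/2)) ^ 2 = u⁻¹ := by
    intro u hu
    rw [← Real.rpow_natCast (u ^ (-(1:ℝ)/2)) 2, ← Real.rpow_mul hu.le]
    rw [show (-(1:ℝ)/2 * ((2:ℕ):ℝ)) = -1 by push_cast; ring, Real.rpow_neg_one]
  -- measurability
  have hFmeas : ∀ u : ℝ, 0 < u → AEStronglyMeasurable (F u) volume := by
    intro u hu
    have hg' : ContinuousOn (fun t => g t * Real.exp (-u * (h t - b))) T :=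
      hg.mul (Real.continuous_exp.comp_continuousOn
        (continuousOn_const.mul (hh.continuousOn.sub continuousOn_const)))
    have hind : AEStronglyMeasurable
        (Set.indicator T (fun t => g t * Real.exp (-u * (h t - b)))) volume :=
      (aestronglyMeasurable_indicator_iff hTmeas).2 (hg'.aestronglyMeasurable hTmeas)
    set Lc : EuclideanSpace ℝ (Fin N) →ₗ[ℝ] EuclideanSpace ℝ (Fin N) :=
      (u ^ (-(1:ℝ)/2)) • LinearMap.id with hLc
    have hLcdet : LinearMap.det Lc ≠ 0 := by
      rw [hLc, LinearMap.det_smul, LinearMap.det_id, mul_one]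
      exact pow_ne_zero _ (Real.rpow_pos_of_pos hu _).ne'
    have hLccoe : ⇑Lc = fun s : EuclideanSpace ℝ (Fin N) => (u ^ (-(1:ℝ)/2)) • s := by
      funext s; simp [hLc]
    have hqmp2 : Measure.QuasiMeasurePreserving
        (fun s : EuclideanSpace ℝ (Fin N) => (u ^ (-(1:ℝ)/2)) • s) volume volume := by
      rw [← hLccoe]
      exact MeasureTheory.Measure.LinearMap.quasiMeasurePreserving (μ := volume) Lc hLcdet
    have hqmp1 : Measure.QuasiMeasurePreserving
        (fun s : EuclideanSpace ℝ (Fin N) => t₀ + s) volume volume :=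
      (measurePreserving_add_left volume t₀).quasiMeasurePreserving
    have := hind.comp_quasiMeasurePreserving (hqmp1.comp hqmp2)
    rw [hFdef]
    exact this
  -- change of variables
  have hchange : ∀ u : ℝ, 0 < u →
      ∫ s, F u s = u ^ ((N:ℝ)/2) * ∫ t in T, g t * Real.exp (-u * (h t - b)) := by
    intro u hu
    have hmain := Measure.integral_comp_smul (volume : Measure (EuclideanSpace ℝ (Fin N)))
      (fun s => Set.indicator T (fun t => g t * Real.exp (-u * (h t - b))) (t₀ + s))
      (u ^ (-(1:ℝ)/2))
    have htrans : (∫ s : EuclideanSpace ℝ (Fin N),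
        Set.indicator T (fun t => g t * Real.exp (-u * (h t - b))) (t₀ + s))
        = ∫ t in T, g t * Real.exp (-u * (h t - b)) := by
      rw [integral_add_left_eq_self
        (fun s => Set.indicator T (fun t => g t * Real.exp (-u * (h t - b))) s) t₀]
      exact integral_indicator hTmeas
    have hscal : |((u ^ (-(1:ℝ)/2)) ^ (Module.finrank ℝ (EuclideanSpace ℝ (Fin N))))⁻¹|
        = u ^ ((N:ℝ)/2) := by
      rw [finrank_euclideanSpace_fin]
      rw [← Real.rpow_natCast (u ^ (-(1:ℝ)/2)) N, ← Real.rpow_mul hu.le, ← Real.rpow_neg hu.le]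
      rw [abs_of_pos (Real.rpow_pos_of_pos hu _)]
      congr 1
      push_cast
      ring
    rw [hFdef]
    simp only
    rw [hmain, htrans, hscal, smul_eq_mul]
  -- dominated convergence
  have key : Tendsto (fun u => ∫ s, F u s) atTop
      (𝓝 (∫ s : EuclideanSpace ℝ (Fin N), g t₀ * Real.exp (-(Q H s) / 2))) := by
    apply tendsto_integral_filter_of_dominated_convergence
      (bound := fun s : EuclideanSpace ℝ (Fin N) => M * Real.exp (-c' * ‖s‖^2))
    · filter_upwards [eventually_gt_atTop (0:ℝ)] with u hu using hFmeas u hu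
    · filter_upwards [eventually_ge_atTop (1:ℝ)] with u hu
      have hu0 : (0:ℝ) < u := lt_of_lt_of_le one_pos hu
      refine Filter.Eventually.of_forall fun s => ?_
      have hcu : (0:ℝ) < u ^ (-(1:ℝ)/2) := Real.rpow_pos_of_pos hu0 _
      by_cases hmem : t₀ + u ^ (-(1:ℝ)/2) • s ∈ T
      · rw [hFdef]
        simp only
        rw [Set.indicator_of_mem hmem]
        rw [Real.norm_eq_abs, abs_mul, Real.abs_exp]
        have hgb : |g (t₀ + u ^ (-(1:ℝ)/2) • s)| ≤ M := hM _ hmem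
        have hexp : Real.exp (-u * (h (t₀ + u ^ (-(1:ℝ)/2) • s) - b))
            ≤ Real.exp (-c' * ‖s‖^2) := by
          rw [Real.exp_le_exp]
          have hnormv : ‖u ^ (-(1:ℝ)/2) • s‖^2 = u⁻¹ * ‖s‖^2 := by
            rw [norm_smul, Real.norm_eq_abs, abs_of_pos hcu, mul_pow, hcusq u hu0]
          rcases lt_or_ge ‖u ^ (-(1:ℝ)/2) • s‖ r with hcase | hcase
          · have hψ := hψlower _ hcase
            have h5 : u * (lam/4 * ‖u ^ (-(1:ℝ)/2) • s‖^2) = lam/4 * ‖s‖^2 := by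
              rw [hnormv]
              field_simp
            have h6 : c' * ‖s‖^2 ≤ lam/4 * ‖s‖^2 :=
              mul_le_mul_of_nonneg_right (min_le_left _ _) (by positivity)
            have h7 : u * (lam/4 * ‖u ^ (-(1:ℝ)/2) • s‖^2)
                ≤ u * (h (t₀ + u ^ (-(1:ℝ)/2) • s) - b) :=
              mul_le_mul_of_nonneg_left hψ hu0.le
            nlinarith
          · have hδt : δ ≤ h (t₀ + u ^ (-(1:ℝ)/2) • s) - b := by
              apply hδ _ hmem
              simpa using hcase
            have hcuD : ‖u ^ (-(1:ℝ)/2) • s‖ ≤ D := by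
              have := hD hmem
              rw [Metric.mem_closedBall, dist_eq_norm] at this
              simpa using this
            have hs2' : ‖s‖^2 = u * ‖u ^ (-(1:ℝ)/2) • s‖^2 := by
              rw [hnormv]
              field_simp
            have e1 : c' * ‖s‖^2 ≤ (δ/D^2) * ‖s‖^2 :=
              mul_le_mul_of_nonneg_right (min_le_right _ _) (by positivity)
            have e2 : ‖s‖^2 ≤ u * D^2 := by
              rw [hs2']
              have h8 : ‖u ^ (-(1:ℝ)/2) • s‖^2 ≤ D^2 := by
                nlinarith [norm_nonneg (u ^ (-(1:ℝ)/2) • s)]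
              nlinarith
            have e3 : (δ/D^2) * ‖s‖^2 ≤ (δ/D^2) * (u * D^2) :=
              mul_le_mul_of_nonneg_left e2 (by positivity)
            have e4 : (δ/D^2) * (u * D^2) = u * δ := by
              field_simp
            have e5 : u * δ ≤ u * (h (t₀ + u ^ (-(1:ℝ)/2) • s) - b) :=
              mul_le_mul_of_nonneg_left hδt hu0.le
            nlinarith
        calc |g (t₀ + u ^ (-(1:ℝ)/2) • s)| * Real.exp (-u * (h (t₀ + u ^ (-(1:ℝ)/2) • s) - b))
            ≤ M * Real.exp (-u * (h (t₀ + u ^ (-(1:ℝ)/2) • s) - b)) :=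
              mul_le_mul_of_nonneg_right hgb (Real.exp_pos _).le
          _ ≤ M * Real.exp (-c' * ‖s‖^2) := mul_le_mul_of_nonneg_left hexp hM0
      · rw [hFdef]
        simp only
        rw [Set.indicator_of_notMem hmem]
        simp
        positivity
    · exact (integrable_gauss hc'pos).const_mul M
    · refine Filter.Eventually.of_forall fun s => ?_
      have hc0 : Tendsto (fun u : ℝ => u ^ (-(1:ℝ)/2)) atTop (𝓝 0) := by
        rw [show (-(1:ℝ)/2) = -(1/2 : ℝ) by ring]
        exact tendsto_rpow_neg_atTop (by norm_num)
      have hvlim : Tendsto (fun u : ℝ => (u ^ (-(1:ℝ)/2)) • s) atTop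
          (𝓝 (0 : EuclideanSpace ℝ (Fin N))) := by
        have := hc0.smul_const s
        simpa using this
      have htlim : Tendsto (fun u : ℝ => t₀ + (u ^ (-(1:ℝ)/2)) • s) atTop (𝓝 t₀) := by
        have := (tendsto_const_nhds (x := t₀) (f := atTop (α := ℝ))).add hvlim
        simpa using this
      have hev : ∀ᶠ u in atTop, t₀ + (u ^ (-(1:ℝ)/2)) • s ∈ T :=
        htlim.eventually_mem hTnhds
      by_cases hs0 : s = 0
      · subst hs0
        have : ∀ u : ℝ, F u 0 = g t₀ := by
          intro u
          rw [hFdef]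
          simp only [smul_zero, add_zero]
          rw [Set.indicator_of_mem ht₀T]
          simp [hbdef]
        rw [show (fun u => F u (0 : EuclideanSpace ℝ (Fin N))) = fun _ => g t₀ from funext this]
        rw [Q_zero]
        simpa using tendsto_const_nhds
      · -- exponent limit
        have hexp : Tendsto (fun u : ℝ =>
            u * (h (t₀ + (u ^ (-(1:ℝ)/2)) • s) - b)) atTop (𝓝 (Q H s / 2)) := by
          have hRq := hR.tendsto_div_nhds_zero
          have hcomp := hRq.comp hvlim
          have hterm1 : Tendsto (fun u : ℝ =>
              u * (h (t₀ + (u ^ (-(1:ℝ)/2)) • s) - b - Q H ((u ^ (-(1:ℝ)/2)) • s) / 2))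
              atTop (𝓝 0) := by
            have h9 := hcomp.const_mul (‖s‖^2)
            rw [mul_zero] at h9
            apply h9.congr'
            filter_upwards [eventually_gt_atTop (0:ℝ)] with u hu
            have hcu : (0:ℝ) < u ^ (-(1:ℝ)/2) := Real.rpow_pos_of_pos hu _
            have hnormv : ‖u ^ (-(1:ℝ)/2) • s‖^2 = u⁻¹ * ‖s‖^2 := by
              rw [norm_smul, Real.norm_eq_abs, abs_of_pos hcu, mul_pow, hcusq u hu]
            simp only [Function.comp]
            rw [hnormv]
            have hsne : ‖s‖ ≠ 0 := norm_ne_zero_iff.2 hs0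
            field_simp
          have hterm2 : ∀ᶠ u in atTop, u * (h (t₀ + (u ^ (-(1:ℝ)/2)) • s) - b)
              = u * (h (t₀ + (u ^ (-(1:ℝ)/2)) • s) - b - Q H ((u ^ (-(1:ℝ)/2)) • s) / 2)
                + Q H s / 2 := by
            filter_upwards [eventually_gt_atTop (0:ℝ)] with u hu
            have : u * (Q H ((u ^ (-(1:ℝ)/2)) • s) / 2) = Q H s / 2 := by
              rw [Q_smul, hcusq u hu]
              field_simp
            linarith [this]
          have := hterm1.add (tendsto_const_nhds (x := Q H s / 2))
          rw [zero_add] at this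
          exact this.congr' (by filter_upwards [hterm2] with u hu using hu.symm)
        have hglim : Tendsto (fun u : ℝ => g (t₀ + (u ^ (-(1:ℝ)/2)) • s)) atTop (𝓝 (g t₀)) :=
          (hg.continuousAt hTnhds).tendsto.comp htlim
        have hfin := hglim.mul ((Real.continuous_exp.tendsto _).comp hexp.neg)
        rw [neg_div]
        apply hfin.congr'
        filter_upwards [hev] with u hu
        rw [hFdef]
        simp only [Function.comp]
        rw [Set.indicator_of_mem hu]
        congr 1
        rw [neg_mul]
  -- value of the limit integral
  have hpi : (0:ℝ) < (2 * Real.pi) ^ ((N:ℝ)/2) :=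
    Real.rpow_pos_of_pos (by positivity) _
  have hdet : (0:ℝ) < H.det ^ (-(1:ℝ)/2) := Real.rpow_pos_of_pos hHpd.det_pos _
  set C := (2 * Real.pi) ^ ((N:ℝ)/2) * H.det ^ (-(1:ℝ)/2) * g t₀ with hC
  have hCne : C ≠ 0 := mul_ne_zero (mul_ne_zero hpi.ne' hdet.ne') hg0
  have hIq : (∫ s : EuclideanSpace ℝ (Fin N), g t₀ * Real.exp (-(Q H s) / 2)) = C := by
    rw [integral_const_mul, integral_gauss_Q H hHpd, hC]
    ring
  have key2 : Tendsto (fun u : ℝ =>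
      u ^ ((N:ℝ)/2) * ∫ t in T, g t * Real.exp (-u * (h t - b))) atTop (𝓝 C) := by
    rw [← hIq]
    apply key.congr'
    filter_upwards [eventually_gt_atTop (0:ℝ)] with u hu using hchange u hu
  -- conclude
  rw [Asymptotics.isEquivalent_iff_tendsto_one (by
    filter_upwards [eventually_gt_atTop (0:ℝ)] with u hu
    exact mul_ne_zero (mul_ne_zero (mul_ne_zero (mul_ne_zero hpi.ne'
      (Real.rpow_pos_of_pos hu _).ne') hdet.ne') hg0) (Real.exp_ne_zero _))]
  have key3 := key2.div_const C
  rw [div_self hCne] at key3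
  apply key3.congr'
  have hsplit : ∀ u : ℝ, (∫ t in T, g t * Real.exp (-u * h t))
      = Real.exp (-u*b) * ∫ t in T, g t * Real.exp (-u * (h t - b)) := by
    intro u
    rw [← integral_const_mul]
    refine integral_congr_ae (Filter.Eventually.of_forall fun t => ?_)
    show g t * Real.exp (-u * h t) = Real.exp (-u*b) * (g t * Real.exp (-u*(h t - b)))
    rw [mul_left_comm, ← Real.exp_add, show -u*b + -u*(h t - b) = -u * h t by ring]
  filter_upwards [eventually_gt_atTop (0:ℝ)] with u hu
  have hupos : (0:ℝ) < u ^ ((N:ℝ)/2) := Real.rpow_pos_of_pos hu _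
  have hrne : u ^ (-(N:ℝ)/2) = (u ^ ((N:ℝ)/2))⁻¹ := by
    rw [neg_div, Real.rpow_neg hu.le]
  simp only [Pi.div_apply]
  rw [hsplit u, hrne, hC]
  field_simp
end

section
/- For the cosine-based field X(t) = ξ₀ + Z(t) − Z(0) on R², the conditional variance τ(t) = Var(X(t) | X₁(t), X₂(t)) equals 3 − cos t₁ − cos t₂ − (1/2) sin² t₁ − (1/2) sin² t₂, and its Hessian at t* = (π, π) is −2 I₂. -/
open MeasureTheory ProbabilityTheory Matrix

/-- First partial derivative in the first variable. -/
noncomputable def pd1 (f : ℝ × ℝ → ℝ) (t : ℝ × ℝ) : ℝ := deriv (fun a => f (a, t.2)) t.1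

/-- First partial derivative in the second variable. -/
noncomputable def pd2 (f : ℝ × ℝ → ℝ) (t : ℝ × ℝ) : ℝ := deriv (fun b => f (t.1, b)) t.2


lemma myGauss_pdf01 (x : ℝ) :
    gaussianPDFReal 0 1 x = (Real.sqrt (2*Real.pi))⁻¹ * Real.exp (-(2⁻¹) * x^2) := by
  rw [gaussianPDFReal]
  push_cast
  rw [mul_one, sub_zero]
  ring_nf

lemma myGauss_int_eq (g : ℝ → ℝ) :
    ∫ x, g x ∂(gaussianReal 0 1) = ∫ x, gaussianPDFReal 0 1 x * g x := by
  rw [gaussianReal_of_var_ne_zero 0 one_ne_zero,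
    show gaussianPDF 0 1 = fun x => ((gaussianPDFReal 0 1 x).toNNReal : ENNReal) from rfl,
    integral_withDensity_eq_integral_smul ((measurable_gaussianPDFReal 0 1).real_toNNReal) g]
  congr 1; funext x
  simp [NNReal.smul_def, Real.coe_toNNReal _ (gaussianPDFReal_nonneg 0 1 x)]

lemma myGauss_integrable (g : ℝ → ℝ)
    (h : Integrable (fun x => gaussianPDFReal 0 1 x * g x)) :
    Integrable g (gaussianReal 0 1) := by
  rw [gaussianReal_of_var_ne_zero 0 one_ne_zero,
    show gaussianPDF 0 1 = fun x => ((gaussianPDFReal 0 1 x).toNNReal : ENNReal) from rfl,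
    integrable_withDensity_iff_integrable_smul ((measurable_gaussianPDFReal 0 1).real_toNNReal)]
  apply h.congr
  filter_upwards with x
  simp [NNReal.smul_def, Real.coe_toNNReal _ (gaussianPDFReal_nonneg 0 1 x)]

lemma myGauss_m1 : ∫ x : ℝ, x * Real.exp (-(2⁻¹) * x^2) = 0 := by
  have hderiv : ∀ x : ℝ, HasDerivAt (fun x : ℝ => -Real.exp (-(2⁻¹) * x^2))
      (x * Real.exp (-(2⁻¹) * x^2)) x := by
    intro x
    refine (((hasDerivAt_pow 2 x).const_mul (-(2⁻¹ : ℝ))).exp).fun_neg.congr_deriv ?_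
    ring
  exact integral_eq_zero_of_hasDerivAt_of_integrable hderiv
    (integrable_mul_exp_neg_mul_sq (by norm_num : (0:ℝ) < 2⁻¹))
    (integrable_exp_neg_mul_sq (by norm_num : (0:ℝ) < 2⁻¹)).neg

lemma integrable_sq_exp : Integrable (fun x : ℝ => x^2 * Real.exp (-(2⁻¹) * x^2)) := by
  have := integrable_rpow_mul_exp_neg_mul_sq (by norm_num : (0:ℝ) < 2⁻¹) (by norm_num : (-1:ℝ) < 2)
  apply this.congr
  filter_upwards with x
  rw [show ((2:ℝ)) = ((2:ℕ):ℝ) by norm_num, Real.rpow_natCast]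

lemma myGauss_m2 : ∫ x : ℝ, x^2 * Real.exp (-(2⁻¹) * x^2) = Real.sqrt (2*Real.pi) := by
  have hderiv : ∀ x : ℝ, HasDerivAt (fun x : ℝ => -(x * Real.exp (-(2⁻¹) * x^2)))
      (x^2 * Real.exp (-(2⁻¹) * x^2) - Real.exp (-(2⁻¹) * x^2)) x := by
    intro x
    refine ((hasDerivAt_id x).fun_mul (((hasDerivAt_pow 2 x).const_mul (-(2⁻¹ : ℝ))).exp)).fun_neg.congr_deriv ?_
    simp only [id_eq]
    ring
  have h0 := integral_eq_zero_of_hasDerivAt_of_integrable hderiv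
    (integrable_sq_exp.sub (integrable_exp_neg_mul_sq (by norm_num : (0:ℝ) < 2⁻¹)))
    (integrable_mul_exp_neg_mul_sq (by norm_num : (0:ℝ) < 2⁻¹)).neg
  rw [integral_sub integrable_sq_exp
    (integrable_exp_neg_mul_sq (by norm_num : (0:ℝ) < 2⁻¹)), sub_eq_zero] at h0
  rw [h0, integral_gaussian]
  rw [show Real.pi / 2⁻¹ = 2 * Real.pi by ring]

lemma sqrt2pi_pos : (0:ℝ) < Real.sqrt (2*Real.pi) :=
  Real.sqrt_pos.mpr (by positivity)

lemma myGauss_integrable_id : Integrable (fun x : ℝ => x) (gaussianReal 0 1) := by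
  apply myGauss_integrable
  have h := (integrable_mul_exp_neg_mul_sq (by norm_num : (0:ℝ) < 2⁻¹)).const_mul
    ((Real.sqrt (2*Real.pi))⁻¹)
  apply h.congr
  filter_upwards with x
  rw [myGauss_pdf01]; ring

lemma myGauss_integrable_sq : Integrable (fun x : ℝ => x^2) (gaussianReal 0 1) := by
  apply myGauss_integrable
  have h := integrable_sq_exp.const_mul ((Real.sqrt (2*Real.pi))⁻¹)
  apply h.congr
  filter_upwards with x
  rw [myGauss_pdf01]; ring

lemma myGauss_int_id : ∫ x : ℝ, x ∂(gaussianReal 0 1) = 0 := by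
  rw [myGauss_int_eq]
  have : (fun x : ℝ => gaussianPDFReal 0 1 x * x)
      = fun x => (Real.sqrt (2*Real.pi))⁻¹ * (x * Real.exp (-(2⁻¹) * x^2)) := by
    funext x; rw [myGauss_pdf01]; ring
  rw [this, integral_const_mul, myGauss_m1, mul_zero]

lemma myGauss_int_sq : ∫ x : ℝ, x^2 ∂(gaussianReal 0 1) = 1 := by
  rw [myGauss_int_eq]
  have : (fun x : ℝ => gaussianPDFReal 0 1 x * x^2)
      = fun x => (Real.sqrt (2*Real.pi))⁻¹ * (x^2 * Real.exp (-(2⁻¹) * x^2)) := by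
    funext x; rw [myGauss_pdf01]; ring
  rw [this, integral_const_mul, myGauss_m2, inv_mul_cancel₀ (ne_of_gt sqrt2pi_pos)]

noncomputable def avec (t : ℝ × ℝ) : Fin 5 → ℝ :=
  ![1/Real.sqrt 2*(Real.cos t.1 - 1), 1/Real.sqrt 2*Real.sin t.1,
    1/Real.sqrt 2*(Real.cos t.2 - 1), 1/Real.sqrt 2*Real.sin t.2, 1]

noncomputable def bvec0 (t : ℝ × ℝ) : Fin 5 → ℝ :=
  ![1/Real.sqrt 2*(-Real.sin t.1), 1/Real.sqrt 2*Real.cos t.1, 0, 0, 0]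

noncomputable def bvec1 (t : ℝ × ℝ) : Fin 5 → ℝ :=
  ![0, 0, 1/Real.sqrt 2*(-Real.sin t.2), 1/Real.sqrt 2*Real.cos t.2, 0]

lemma half_inv_matrix : (!![2⁻¹,0;0,2⁻¹] : Matrix (Fin 2) (Fin 2) ℝ)⁻¹ = !![2,0;0,2] :=
  Matrix.inv_eq_right_inv (by rw [Matrix.mul_fin_two, Matrix.one_fin_two]; norm_num)

/-- For the cosine-based field `X(t) = ξ₀ + Z(t) − Z(0)` on `ℝ²`, the conditional
variance `τ(t) = Var(X(t) | X₁(t), X₂(t))` (given by the Gaussian regression formula)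
equals `3 − cos t₁ − cos t₂ − (1/2) sin²t₁ − (1/2) sin²t₂`, and its Hessian at
`t* = (π, π)` is `−2I₂`. -/
theorem cosine_field_conditional_variance
    {Ω : Type*} [MeasurableSpace Ω] (P : Measure Ω) [IsProbabilityMeasure P]
    (ξ : Fin 5 → Ω → ℝ) (hmeas : ∀ i, Measurable (ξ i))
    (hindep : iIndepFun ξ P)
    (hgauss : ∀ i, Measure.map (ξ i) P = gaussianReal 0 1)
    (Z : ℝ × ℝ → Ω → ℝ)
    (hZ : ∀ t ω, Z t ω = (1 / Real.sqrt 2) *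
      (ξ 0 ω * Real.cos t.1 + ξ 1 ω * Real.sin t.1 +
        ξ 2 ω * Real.cos t.2 + ξ 3 ω * Real.sin t.2))
    (X : ℝ × ℝ → Ω → ℝ)
    (hX : ∀ t ω, X t ω = ξ 4 ω + Z t ω - Z (0, 0) ω)
    (D : Fin 2 → (ℝ × ℝ) → Ω → ℝ)
    (hD0 : ∀ t ω, D 0 t ω = pd1 (fun s => X s ω) t)
    (hD1 : ∀ t ω, D 1 t ω = pd2 (fun s => X s ω) t)
    (τ : ℝ × ℝ → ℝ)
    (hτ : ∀ t, τ t = (∫ ω, X t ω ^ 2 ∂P) -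
      dotProduct (fun i => ∫ ω, X t ω * D i t ω ∂P)
        ((Matrix.of fun i j : Fin 2 => ∫ ω, D i t ω * D j t ω ∂P)⁻¹ *ᵥ
          fun i => ∫ ω, X t ω * D i t ω ∂P)) :
    (∀ t : ℝ × ℝ, τ t = 3 - Real.cos t.1 - Real.cos t.2
        - (1 / 2) * Real.sin t.1 ^ 2 - (1 / 2) * Real.sin t.2 ^ 2) ∧
      pd1 (pd1 τ) (Real.pi, Real.pi) = -2 ∧
      pd2 (pd2 τ) (Real.pi, Real.pi) = -2 ∧
      pd1 (pd2 τ) (Real.pi, Real.pi) = 0 ∧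
      pd2 (pd1 τ) (Real.pi, Real.pi) = 0 := by
  have hsq : ((1:ℝ) / Real.sqrt 2)^2 = 2⁻¹ := by
    rw [div_pow, one_pow, Real.sq_sqrt (by norm_num : (0:ℝ) ≤ 2)]
    norm_num
  -- moments
  have hInt : ∀ i, Integrable (ξ i) P := by
    intro i
    have h := myGauss_integrable_id
    rw [← hgauss i] at h
    exact (integrable_map_measure aestronglyMeasurable_id (hmeas i).aemeasurable).mp h
  have hM1 : ∀ i, ∫ ω, ξ i ω ∂P = 0 := by
    intro i
    have h2 : ∫ ω, ξ i ω ∂P = ∫ x, x ∂(Measure.map (ξ i) P) :=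
      (integral_map (hmeas i).aemeasurable measurable_id.aestronglyMeasurable).symm
    rw [h2, hgauss i, myGauss_int_id]
  have hIntSq : ∀ i, Integrable (fun ω => ξ i ω * ξ i ω) P := by
    intro i
    have h := myGauss_integrable_sq
    rw [← hgauss i] at h
    have h2 := (integrable_map_measure (by fun_prop) (hmeas i).aemeasurable).mp h
    apply h2.congr
    filter_upwards with ω
    simp [Function.comp]; ring
  have hM2 : ∀ i, ∫ ω, ξ i ω * ξ i ω ∂P = 1 := by
    intro i
    have h2 : ∫ ω, ξ i ω * ξ i ω ∂P = ∫ x, x^2 ∂(Measure.map (ξ i) P) := by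
      rw [integral_map (hmeas i).aemeasurable
        (by fun_prop : AEStronglyMeasurable (fun x : ℝ => x^2) _)]
      congr 1; funext ω; ring
    rw [h2, hgauss i, myGauss_int_sq]
  have hIntMul : ∀ i j, Integrable (fun ω => ξ i ω * ξ j ω) P := by
    intro i j
    rcases eq_or_ne i j with rfl | hij
    · exact hIntSq i
    · exact (hindep.indepFun hij).integrable_mul (hInt i) (hInt j)
  have hE : ∀ i j, ∫ ω, ξ i ω * ξ j ω ∂P = if i = j then 1 else 0 := by
    intro i j
    rcases eq_or_ne i j with rfl | hij
    · simp [hM2 i]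
    · have h := (hindep.indepFun hij).integral_mul_eq_mul_integral (hInt i).aestronglyMeasurable (hInt j).aestronglyMeasurable
      rw [Pi.mul_def] at h
      rw [if_neg hij, h, hM1 i, zero_mul]
  have key : ∀ a b : Fin 5 → ℝ,
      ∫ ω, (∑ i, a i * ξ i ω) * (∑ j, b j * ξ j ω) ∂P = ∑ i, a i * b i := by
    intro a b
    have h1 : ∀ ω : Ω, (∑ i, a i * ξ i ω) * (∑ j, b j * ξ j ω)
        = ∑ i : Fin 5, ∑ j : Fin 5, (a i * b j) * (ξ i ω * ξ j ω) := by
      intro ω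
      rw [Finset.sum_mul_sum]
      exact Finset.sum_congr rfl fun i _ => Finset.sum_congr rfl fun j _ => by ring
    simp_rw [h1]
    rw [integral_finset_sum _ (fun i _ => integrable_finset_sum _
      (fun j _ => (hIntMul i j).const_mul _))]
    refine Finset.sum_congr rfl fun i _ => ?_
    rw [integral_finset_sum _ (fun j _ => (hIntMul i j).const_mul _)]
    simp_rw [integral_const_mul, hE]
    simp
  -- sum representations
  have hXsum : ∀ t ω, X t ω = ∑ i, avec t i * ξ i ω := by
    intro t ω
    rw [hX t ω, hZ, hZ]
    simp [avec, Fin.sum_univ_five]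
    ring
  have hD0' : ∀ t ω, D 0 t ω = ∑ i, bvec0 t i * ξ i ω := by
    intro t ω
    rw [hD0]
    show deriv (fun a => X (a, t.2) ω) t.1 = _
    have hfun : (fun a => X (a, t.2) ω) = fun a =>
        ξ 4 ω + (1 / Real.sqrt 2) * (ξ 0 ω * Real.cos a + ξ 1 ω * Real.sin a +
          ξ 2 ω * Real.cos t.2 + ξ 3 ω * Real.sin t.2) - Z (0,0) ω := by
      funext a; rw [hX, hZ]
    have H : HasDerivAt (fun a =>
        ξ 4 ω + (1 / Real.sqrt 2) * (ξ 0 ω * Real.cos a + ξ 1 ω * Real.sin a +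
          ξ 2 ω * Real.cos t.2 + ξ 3 ω * Real.sin t.2) - Z (0,0) ω)
        (1 / Real.sqrt 2 * (ξ 0 ω * -Real.sin t.1 + ξ 1 ω * Real.cos t.1)) t.1 :=
      (((((((Real.hasDerivAt_cos t.1).const_mul (ξ 0 ω)).add
        ((Real.hasDerivAt_sin t.1).const_mul (ξ 1 ω))).add_const
        (ξ 2 ω * Real.cos t.2)).add_const (ξ 3 ω * Real.sin t.2)).const_mul
        (1 / Real.sqrt 2)).const_add (ξ 4 ω)).sub_const (Z (0,0) ω)
    rw [hfun, H.deriv]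
    simp [bvec0, Fin.sum_univ_five]
    ring
  have hD1' : ∀ t ω, D 1 t ω = ∑ i, bvec1 t i * ξ i ω := by
    intro t ω
    rw [hD1]
    show deriv (fun b => X (t.1, b) ω) t.2 = _
    have hfun : (fun b => X (t.1, b) ω) = fun b =>
        ξ 4 ω + (1 / Real.sqrt 2) * (ξ 0 ω * Real.cos t.1 + ξ 1 ω * Real.sin t.1 +
          ξ 2 ω * Real.cos b + ξ 3 ω * Real.sin b) - Z (0,0) ω := by
      funext b; rw [hX, hZ]
    have H : HasDerivAt (fun b =>
        ξ 4 ω + (1 / Real.sqrt 2) * (ξ 0 ω * Real.cos t.1 + ξ 1 ω * Real.sin t.1 +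
          ξ 2 ω * Real.cos b + ξ 3 ω * Real.sin b) - Z (0,0) ω)
        (1 / Real.sqrt 2 * (0 + ξ 2 ω * -Real.sin t.2 + ξ 3 ω * Real.cos t.2)) t.2 := by
      have h0 : HasDerivAt (fun _ : ℝ => ξ 0 ω * Real.cos t.1 + ξ 1 ω * Real.sin t.1)
          0 t.2 := hasDerivAt_const _ _
      exact ((((h0.add ((Real.hasDerivAt_cos t.2).const_mul (ξ 2 ω))).add
        ((Real.hasDerivAt_sin t.2).const_mul (ξ 3 ω))).const_mul
        (1 / Real.sqrt 2)).const_add (ξ 4 ω)).sub_const (Z (0,0) ω)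
    rw [hfun, H.deriv]
    simp [bvec1, Fin.sum_univ_five]
    ring
  -- integral evaluations
  have eXX : ∀ t, ∫ ω, X t ω ^ 2 ∂P = 3 - Real.cos t.1 - Real.cos t.2 := by
    intro t
    have h : ∫ ω, X t ω ^ 2 ∂P
        = ∫ ω, (∑ i, avec t i * ξ i ω) * (∑ j, avec t j * ξ j ω) ∂P := by
      congr 1; funext ω; rw [hXsum t ω]; ring
    rw [h, key]
    simp [avec, Fin.sum_univ_five]
    linear_combination (((Real.cos t.1 - 1)^2 + Real.sin t.1^2
        + (Real.cos t.2 - 1)^2 + Real.sin t.2^2)) * hsq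
      + 2⁻¹ * Real.sin_sq_add_cos_sq t.1 + 2⁻¹ * Real.sin_sq_add_cos_sq t.2
  have eXD0 : ∀ t, ∫ ω, X t ω * D 0 t ω ∂P = 2⁻¹ * Real.sin t.1 := by
    intro t
    have h : ∫ ω, X t ω * D 0 t ω ∂P
        = ∫ ω, (∑ i, avec t i * ξ i ω) * (∑ j, bvec0 t j * ξ j ω) ∂P := by
      congr 1; funext ω; rw [hXsum t ω, hD0' t ω]
    rw [h, key]
    simp [avec, bvec0, Fin.sum_univ_five]
    linear_combination Real.sin t.1 * hsq
  have eXD1 : ∀ t, ∫ ω, X t ω * D 1 t ω ∂P = 2⁻¹ * Real.sin t.2 := by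
    intro t
    have h : ∫ ω, X t ω * D 1 t ω ∂P
        = ∫ ω, (∑ i, avec t i * ξ i ω) * (∑ j, bvec1 t j * ξ j ω) ∂P := by
      congr 1; funext ω; rw [hXsum t ω, hD1' t ω]
    rw [h, key]
    simp [avec, bvec1, Fin.sum_univ_five]
    linear_combination Real.sin t.2 * hsq
  have eD00 : ∀ t, ∫ ω, D 0 t ω * D 0 t ω ∂P = 2⁻¹ := by
    intro t
    have h : ∫ ω, D 0 t ω * D 0 t ω ∂P
        = ∫ ω, (∑ i, bvec0 t i * ξ i ω) * (∑ j, bvec0 t j * ξ j ω) ∂P := by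
      congr 1; funext ω; rw [hD0' t ω]
    rw [h, key]
    simp [bvec0, Fin.sum_univ_five]
    linear_combination (Real.sin t.1^2 + Real.cos t.1^2) * hsq
      + 2⁻¹ * Real.sin_sq_add_cos_sq t.1
  have eD11 : ∀ t, ∫ ω, D 1 t ω * D 1 t ω ∂P = 2⁻¹ := by
    intro t
    have h : ∫ ω, D 1 t ω * D 1 t ω ∂P
        = ∫ ω, (∑ i, bvec1 t i * ξ i ω) * (∑ j, bvec1 t j * ξ j ω) ∂P := by
      congr 1; funext ω; rw [hD1' t ω]
    rw [h, key]
    simp [bvec1, Fin.sum_univ_five]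
    linear_combination (Real.sin t.2^2 + Real.cos t.2^2) * hsq
      + 2⁻¹ * Real.sin_sq_add_cos_sq t.2
  have eD01 : ∀ t, ∫ ω, D 0 t ω * D 1 t ω ∂P = 0 := by
    intro t
    have h : ∫ ω, D 0 t ω * D 1 t ω ∂P
        = ∫ ω, (∑ i, bvec0 t i * ξ i ω) * (∑ j, bvec1 t j * ξ j ω) ∂P := by
      congr 1; funext ω; rw [hD0' t ω, hD1' t ω]
    rw [h, key]
    simp [bvec0, bvec1, Fin.sum_univ_five]
  have eD10 : ∀ t, ∫ ω, D 1 t ω * D 0 t ω ∂P = 0 := by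
    intro t
    have h : ∫ ω, D 1 t ω * D 0 t ω ∂P
        = ∫ ω, (∑ i, bvec1 t i * ξ i ω) * (∑ j, bvec0 t j * ξ j ω) ∂P := by
      congr 1; funext ω; rw [hD0' t ω, hD1' t ω]
    rw [h, key]
    simp [bvec0, bvec1, Fin.sum_univ_five]
  -- part 1
  have part1 : ∀ t : ℝ × ℝ, τ t = 3 - Real.cos t.1 - Real.cos t.2
      - (1 / 2) * Real.sin t.1 ^ 2 - (1 / 2) * Real.sin t.2 ^ 2 := by
    intro t
    have hv : (fun i : Fin 2 => ∫ ω, X t ω * D i t ω ∂P)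
        = ![2⁻¹ * Real.sin t.1, 2⁻¹ * Real.sin t.2] := by
      funext i
      fin_cases i
      · simpa using eXD0 t
      · simpa using eXD1 t
    have hM : (Matrix.of fun i j : Fin 2 => ∫ ω, D i t ω * D j t ω ∂P)
        = !![2⁻¹,0;0,2⁻¹] := by
      apply Matrix.ext
      intro i j
      fin_cases i <;> fin_cases j <;>
        simp [Matrix.of_apply, eD00 t, eD01 t, eD10 t, eD11 t]
    rw [hτ t, eXX t, hv, hM, half_inv_matrix]
    simp [dotProduct, Matrix.mulVec, Fin.sum_univ_two]
    ring
  have hp1 : ∀ t : ℝ × ℝ, pd1 τ t = Real.sin t.1 - Real.sin t.1 * Real.cos t.1 := by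
    intro t
    show deriv (fun a => τ (a, t.2)) t.1 = _
    have hfun : (fun a => τ (a, t.2)) = fun a => 3 - Real.cos a - Real.cos t.2
        - (1 / 2) * Real.sin a ^ 2 - (1 / 2) * Real.sin t.2 ^ 2 := by
      funext a; rw [part1 (a, t.2)]
    rw [hfun]
    have H : HasDerivAt (fun a => 3 - Real.cos a - Real.cos t.2
        - (1 / 2) * Real.sin a ^ 2 - (1 / 2) * Real.sin t.2 ^ 2)
        (Real.sin t.1 - Real.sin t.1 * Real.cos t.1) t.1 := by
      have h1 := (((Real.hasDerivAt_cos t.1).const_sub (3:ℝ)).sub_const (Real.cos t.2))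
      have h2 := (((Real.hasDerivAt_sin t.1).pow 2).const_mul ((1:ℝ)/2))
      refine ((h1.fun_sub h2).sub_const ((1/2) * Real.sin t.2 ^ 2)).congr_deriv ?_
      push_cast
      ring
    rw [H.deriv]
  have hp2 : ∀ t : ℝ × ℝ, pd2 τ t = Real.sin t.2 - Real.sin t.2 * Real.cos t.2 := by
    intro t
    show deriv (fun b => τ (t.1, b)) t.2 = _
    have hfun : (fun b => τ (t.1, b)) = fun b => 3 - Real.cos t.1 - Real.cos b
        - (1 / 2) * Real.sin t.1 ^ 2 - (1 / 2) * Real.sin b ^ 2 := by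
      funext b; rw [part1 (t.1, b)]
    rw [hfun]
    have H : HasDerivAt (fun b => 3 - Real.cos t.1 - Real.cos b
        - (1 / 2) * Real.sin t.1 ^ 2 - (1 / 2) * Real.sin b ^ 2)
        (Real.sin t.2 - Real.sin t.2 * Real.cos t.2) t.2 := by
      have h1 := ((Real.hasDerivAt_cos t.2).const_sub (3 - Real.cos t.1)).sub_const
        ((1 / 2) * Real.sin t.1 ^ 2)
      have h2 := (((Real.hasDerivAt_sin t.2).pow 2).const_mul ((1:ℝ)/2))
      refine (h1.fun_sub h2).congr_deriv ?_
      push_cast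
      ring
    rw [H.deriv]
  refine ⟨part1, ?_, ?_, ?_, ?_⟩
  · show deriv (fun a => pd1 τ (a, Real.pi)) Real.pi = -2
    have hfun : (fun a => pd1 τ (a, Real.pi))
        = fun a => Real.sin a - Real.sin a * Real.cos a := by
      funext a; rw [hp1 (a, Real.pi)]
    rw [hfun]
    have H : HasDerivAt (fun a => Real.sin a - Real.sin a * Real.cos a)
        (Real.cos Real.pi - (Real.cos Real.pi * Real.cos Real.pi
          + Real.sin Real.pi * -Real.sin Real.pi)) Real.pi :=
      (Real.hasDerivAt_sin Real.pi).sub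
        ((Real.hasDerivAt_sin Real.pi).mul (Real.hasDerivAt_cos Real.pi))
    rw [H.deriv]
    simp [Real.cos_pi, Real.sin_pi]
    norm_num
  · show deriv (fun b => pd2 τ (Real.pi, b)) Real.pi = -2
    have hfun : (fun b => pd2 τ (Real.pi, b))
        = fun b => Real.sin b - Real.sin b * Real.cos b := by
      funext b; rw [hp2 (Real.pi, b)]
    rw [hfun]
    have H : HasDerivAt (fun b => Real.sin b - Real.sin b * Real.cos b)
        (Real.cos Real.pi - (Real.cos Real.pi * Real.cos Real.pi
          + Real.sin Real.pi * -Real.sin Real.pi)) Real.pi :=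
      (Real.hasDerivAt_sin Real.pi).sub
        ((Real.hasDerivAt_sin Real.pi).mul (Real.hasDerivAt_cos Real.pi))
    rw [H.deriv]
    simp [Real.cos_pi, Real.sin_pi]
    norm_num
  · show deriv (fun a => pd2 τ (a, Real.pi)) Real.pi = 0
    have hfun : (fun a => pd2 τ (a, Real.pi)) = fun _ : ℝ => (0:ℝ) := by
      funext a; rw [hp2 (a, Real.pi)]; simp [Real.sin_pi]
    rw [hfun, deriv_const]
  · show deriv (fun b => pd1 τ (Real.pi, b)) Real.pi = 0
    have hfun : (fun b => pd1 τ (Real.pi, b)) = fun _ : ℝ => (0:ℝ) := by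
      funext b; rw [hp1 (Real.pi, b)]; simp [Real.sin_pi]
    rw [hfun, deriv_const]
end
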